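/- arXiv:1102.2280 — 10 statements merged into one kernel-verified Lean document; each statement's English description precedes it below -/
import Mathlib

section
/- Let (R,C) be a normalized bimatrix game with n pure strategies per player, let (x,y) be a Nash equilibrium of (R,C), and let ε ∈ (0,1]. Define x' = (1 − ε/5)·x + (ε/5)·u and y' = (1 − ε/5)·y + (ε/5)·u, where u = (1/n, …, 1/n) is the uniform mixed strategy. Then (x', y') is an ε-approximate Nash equilibrium of (R,C), and every coordinate of x' and of y' is at least ε/(5n). -/
open Finset

/-- `x` is a mixed strategy over `n` pure strategies. -/
def IsMixed (n : ℕ) (x : Fin n → ℝ) : Prop :=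
  (∀ i, 0 ≤ x i) ∧ ∑ i, x i = 1

/-- `(x, y)` is a Nash equilibrium of the bimatrix game `(R, C)`. -/
def IsNash (n : ℕ) (R C : Matrix (Fin n) (Fin n) ℝ) (x y : Fin n → ℝ) : Prop :=
  (∀ x' : Fin n → ℝ, IsMixed n x' →
    ∑ i, ∑ j, x' i * R i j * y j ≤ ∑ i, ∑ j, x i * R i j * y j) ∧
  (∀ y' : Fin n → ℝ, IsMixed n y' →
    ∑ i, ∑ j, x i * C i j * y' j ≤ ∑ i, ∑ j, x i * C i j * y j)

/-- `(x, y)` is an ε-approximate Nash equilibrium of the bimatrix game `(R, C)`. -/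
def IsApproxNash (n : ℕ) (R C : Matrix (Fin n) (Fin n) ℝ) (ε : ℝ) (x y : Fin n → ℝ) : Prop :=
  (∀ x' : Fin n → ℝ, IsMixed n x' →
    ∑ i, ∑ j, x' i * R i j * y j - ε ≤ ∑ i, ∑ j, x i * R i j * y j) ∧
  (∀ y' : Fin n → ℝ, IsMixed n y' →
    ∑ i, ∑ j, x i * C i j * y' j - ε ≤ ∑ i, ∑ j, x i * C i j * y j)

lemma uniform_mixed (n : ℕ) (hn : 0 < n) : IsMixed n (fun _ => (1 : ℝ) / n) := by
  constructor
  · intro i; positivity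
  · simp [Finset.sum_const, Finset.card_univ]
    field_simp

lemma combo_mixed (n : ℕ) (hn : 0 < n) (x : Fin n → ℝ) (hx : IsMixed n x)
    (δ : ℝ) (h0 : 0 ≤ δ) (h1 : δ ≤ 1) :
    IsMixed n (fun i => (1 - δ) * x i + δ * (1 / n)) := by
  constructor
  · intro i
    have := hx.1 i
    have : (0:ℝ) ≤ (1 - δ) * x i := mul_nonneg (by linarith) this
    have hu : (0:ℝ) ≤ δ * (1 / n) := by positivity
    linarith
  · rw [Finset.sum_add_distrib, ← Finset.mul_sum, hx.2, Finset.sum_const, Finset.card_univ]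
    simp
    field_simp
    ring

lemma B_le_one (n : ℕ) (M : Matrix (Fin n) (Fin n) ℝ)
    (hM : ∀ i j, M i j ∈ Set.Icc (-1 : ℝ) 1) (a b : Fin n → ℝ)
    (ha : IsMixed n a) (hb : IsMixed n b) :
    ∑ i, ∑ j, a i * M i j * b j ≤ 1 := by
  have h : ∑ i, ∑ j, a i * M i j * b j ≤ ∑ i, ∑ j, a i * b j := by
    refine Finset.sum_le_sum fun i _ => Finset.sum_le_sum fun j _ => ?_
    have : a i * M i j * b j ≤ a i * 1 * b j :=
      mul_le_mul_of_nonneg_right (mul_le_mul_of_nonneg_left (hM i j).2 (ha.1 i)) (hb.1 j)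
    simpa using this
  calc ∑ i, ∑ j, a i * M i j * b j ≤ ∑ i, ∑ j, a i * b j := h
    _ = (∑ i, a i) * (∑ j, b j) := by rw [Finset.sum_mul_sum]
    _ = 1 := by rw [ha.2, hb.2]; ring

lemma neg_one_le_B (n : ℕ) (M : Matrix (Fin n) (Fin n) ℝ)
    (hM : ∀ i j, M i j ∈ Set.Icc (-1 : ℝ) 1) (a b : Fin n → ℝ)
    (ha : IsMixed n a) (hb : IsMixed n b) :
    -1 ≤ ∑ i, ∑ j, a i * M i j * b j := by
  have h : ∑ i, ∑ j, a i * (-(b j)) ≤ ∑ i, ∑ j, a i * M i j * b j := by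
    refine Finset.sum_le_sum fun i _ => Finset.sum_le_sum fun j _ => ?_
    have : a i * (-1) * b j ≤ a i * M i j * b j :=
      mul_le_mul_of_nonneg_right (mul_le_mul_of_nonneg_left (hM i j).1 (ha.1 i)) (hb.1 j)
    linarith [this]
  have h2 : ∑ i, ∑ j, a i * (-(b j)) = -1 := by
    have : ∑ i, ∑ j, a i * (-(b j)) = (∑ i, a i) * (∑ j, -(b j)) := by
      rw [Finset.sum_mul_sum]
    rw [this, ha.2, Finset.sum_neg_distrib, hb.2]; ring
  linarith

lemma key_ineq (ε A U'' P Pu Uy Uu : ℝ) (hε : 0 < ε) (hε1 : ε ≤ 1)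
    (h1 : A ≤ P) (h2 : U'' ≤ 1) (h3 : -1 ≤ Pu) (h4 : P ≤ 1) (h5 : -1 ≤ Uy) (h6 : -1 ≤ Uu) :
    (1 - ε/5) * A + ε/5 * U'' - ε ≤
    (1 - ε/5) * ((1 - ε/5) * P + ε/5 * Pu) + ε/5 * ((1 - ε/5) * Uy + ε/5 * Uu) := by
  have d0 : (0:ℝ) ≤ ε/5 := by linarith
  have d1 : (0:ℝ) ≤ 1 - ε/5 := by linarith
  nlinarith [mul_nonneg d1 (sub_nonneg.2 h1), mul_nonneg (mul_nonneg d1 d0) (by linarith : (0:ℝ) ≤ Pu + 1),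
    mul_nonneg (mul_nonneg d0 d1) (by linarith : (0:ℝ) ≤ Uy + 1),
    mul_nonneg (mul_nonneg d0 d0) (by linarith : (0:ℝ) ≤ Uu + 1),
    mul_nonneg d0 (by linarith : (0:ℝ) ≤ 1 - U''),
    mul_nonneg (mul_nonneg d0 d1) (by linarith : (0:ℝ) ≤ 1 - P)]

lemma B_lin_left (n : ℕ) (M : Matrix (Fin n) (Fin n) ℝ) (a b : ℝ) (x z y : Fin n → ℝ) :
    ∑ i, ∑ j, (a * x i + b * z i) * M i j * y j =
      a * ∑ i, ∑ j, x i * M i j * y j + b * ∑ i, ∑ j, z i * M i j * y j := by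
  simp only [Finset.mul_sum, ← Finset.sum_add_distrib]
  exact Finset.sum_congr rfl fun i _ => Finset.sum_congr rfl fun j _ => by ring

lemma B_lin_right (n : ℕ) (M : Matrix (Fin n) (Fin n) ℝ) (a b : ℝ) (x y w : Fin n → ℝ) :
    ∑ i, ∑ j, x i * M i j * (a * y j + b * w j) =
      a * ∑ i, ∑ j, x i * M i j * y j + b * ∑ i, ∑ j, x i * M i j * w j := by
  simp only [Finset.mul_sum, ← Finset.sum_add_distrib]
  exact Finset.sum_congr rfl fun i _ => Finset.sum_congr rfl fun j _ => by ring

/-- Mixing a Nash equilibrium with weight `ε/5` of the uniform strategy yields an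
`ε`-approximate Nash equilibrium all of whose probabilities are at least `ε/(5n)`. -/
theorem stmt1 (n : ℕ) (hn : 0 < n) (R C : Matrix (Fin n) (Fin n) ℝ)
    (hR : ∀ i j, R i j ∈ Set.Icc (-1 : ℝ) 1) (hC : ∀ i j, C i j ∈ Set.Icc (-1 : ℝ) 1)
    (x y : Fin n → ℝ) (hx : IsMixed n x) (hy : IsMixed n y)
    (hxy : IsNash n R C x y)
    (ε : ℝ) (hε : 0 < ε) (hε1 : ε ≤ 1) :
    IsApproxNash n R C ε
      (fun i => (1 - ε / 5) * x i + (ε / 5) * (1 / n))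
      (fun j => (1 - ε / 5) * y j + (ε / 5) * (1 / n)) ∧
    (∀ i, ε / (5 * n) ≤ (1 - ε / 5) * x i + (ε / 5) * (1 / n)) ∧
    (∀ j, ε / (5 * n) ≤ (1 - ε / 5) * y j + (ε / 5) * (1 / n)) := by
  set u : Fin n → ℝ := fun _ => (1 : ℝ) / n with hu
  have hum : IsMixed n u := uniform_mixed n hn
  have hδ0 : (0:ℝ) ≤ ε / 5 := by linarith
  have hδ1 : ε / 5 ≤ 1 := by linarith
  have hcoord : ∀ z : Fin n → ℝ, IsMixed n z →
      ∀ i, ε / (5 * n) ≤ (1 - ε / 5) * z i + (ε / 5) * (1 / n) := by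
    intro z hz i
    have h1 : (0:ℝ) ≤ (1 - ε / 5) * z i := mul_nonneg (by linarith) (hz.1 i)
    have h2 : ε / (5 * n) = (ε / 5) * (1 / n) := by
      field_simp
    linarith
  refine ⟨⟨?_, ?_⟩, hcoord x hx, hcoord y hy⟩
  · intro x'' hx''
    have hBxy := hxy.1 x'' hx''
    have hE1 : ∑ i, ∑ j, x'' i * R i j * ((1 - ε / 5) * y j + (ε / 5) * u j) =
        (1 - ε / 5) * ∑ i, ∑ j, x'' i * R i j * y j +
        (ε / 5) * ∑ i, ∑ j, x'' i * R i j * u j := B_lin_right n R _ _ x'' y u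
    have hE2 : ∑ i, ∑ j, ((1 - ε / 5) * x i + (ε / 5) * u i) * R i j *
          ((1 - ε / 5) * y j + (ε / 5) * u j) =
        (1 - ε / 5) * ((1 - ε / 5) * ∑ i, ∑ j, x i * R i j * y j +
          (ε / 5) * ∑ i, ∑ j, x i * R i j * u j) +
        (ε / 5) * ((1 - ε / 5) * ∑ i, ∑ j, u i * R i j * y j +
          (ε / 5) * ∑ i, ∑ j, u i * R i j * u j) := by
      rw [B_lin_left n R _ _ x u _, B_lin_right n R _ _ x y u, B_lin_right n R _ _ u y u]
    have b1 := B_le_one n R hR x'' u hx'' hum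
    have b2 := neg_one_le_B n R hR x u hx hum
    have b3 := B_le_one n R hR x y hx hy
    have b4 := neg_one_le_B n R hR x y hx hy
    have b5 := neg_one_le_B n R hR u y hum hy
    have b6 := neg_one_le_B n R hR u u hum hum
    simp only [hu] at hE1 hE2 ⊢
    rw [hE1, hE2]
    exact key_ineq ε _ _ _ _ _ _ hε hε1 hBxy b1 b2 b3 b5 b6
  · intro y'' hy''
    have hBxy := hxy.2 y'' hy''
    have hE1 : ∑ i, ∑ j, ((1 - ε / 5) * x i + (ε / 5) * u i) * C i j * y'' j =
        (1 - ε / 5) * ∑ i, ∑ j, x i * C i j * y'' j +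
        (ε / 5) * ∑ i, ∑ j, u i * C i j * y'' j := B_lin_left n C _ _ x u y''
    have hE2 : ∑ i, ∑ j, ((1 - ε / 5) * x i + (ε / 5) * u i) * C i j *
          ((1 - ε / 5) * y j + (ε / 5) * u j) =
        (1 - ε / 5) * ((1 - ε / 5) * ∑ i, ∑ j, x i * C i j * y j +
          (ε / 5) * ∑ i, ∑ j, x i * C i j * u j) +
        (ε / 5) * ((1 - ε / 5) * ∑ i, ∑ j, u i * C i j * y j +
          (ε / 5) * ∑ i, ∑ j, u i * C i j * u j) := by
      rw [B_lin_left n C _ _ x u _, B_lin_right n C _ _ x y u, B_lin_right n C _ _ u y u]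
    have b1 := B_le_one n C hC u y'' hum hy''
    have b2 := neg_one_le_B n C hC x u hx hum
    have b3 := B_le_one n C hC x y hx hy
    have b4 := neg_one_le_B n C hC x y hx hy
    have b5 := neg_one_le_B n C hC u y hum hy
    have b6 := neg_one_le_B n C hC u u hum hum
    simp only [hu] at hE1 hE2 ⊢
    rw [hE1, hE2]
    have := key_ineq ε (∑ i, ∑ j, x i * C i j * y'' j) (∑ i, ∑ j, u i * C i j * y'' j)
      (∑ i, ∑ j, x i * C i j * y j) (∑ i, ∑ j, x i * C i j * u j)
      (∑ i, ∑ j, u i * C i j * y j) (∑ i, ∑ j, u i * C i j * u j)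
      hε hε1 hBxy b1 b2 b3 b5 b6
    simpa [hu] using this
end

section
/- Let (R,C) be a normalized bimatrix game with n ≥ 2 pure strategies per player, let (x,y) be a Nash equilibrium of (R,C), let ε > 0, and let t be a positive integer with t ≥ 16·ln(n)/ε². Let i_1, …, i_t be i.i.d. samples from the probability distribution x on {1,…,n} and j_1, …, j_t be i.i.d. samples from y, with all 2t samples mutually independent; let 𝒳 be the empirical distribution of the i-samples (𝒳_i = |{s : i_s = i}|/t) and 𝒴 that of the j-samples. Then with probability at least 1 − 4/n the following all hold: (1) (𝒳,𝒴) is an ε-well-supported Nash equilibrium of (R,C); (2) |(R𝒴)_i − (Ry)_i| ≤ ε/2 for all i ∈ {1,…,n}; (3) |(𝒳ᵀC)_j − (xᵀC)_j| ≤ ε/2 for all j ∈ {1,…,n}. -/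
open Finset

open scoped Classical

/-- `(x, y)` is an ε-well-supported Nash equilibrium of the bimatrix game `(R, C)`. -/
def IsWSNE (n : ℕ) (R C : Matrix (Fin n) (Fin n) ℝ) (ε : ℝ) (x y : Fin n → ℝ) : Prop :=
  (∀ i i' : Fin n, 0 < x i → ∑ j, R i j * y j ≥ ∑ j, R i' j * y j - ε) ∧
  (∀ j j' : Fin n, 0 < y j → ∑ i, x i * C i j ≥ ∑ i, x i * C i j' - ε)

/-- The empirical distribution of a `t`-tuple of samples from `{1,…,n}`. -/
noncomputable def empDist (n t : ℕ) (a : Fin t → Fin n) (i : Fin n) : ℝ :=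
  ((univ.filter fun s => a s = i).card : ℝ) / t

open Real

lemma key_nonneg (m : ℝ) (hm : |m| ≤ 1) (l : ℝ) (hl : 0 ≤ l) :
    (1 - m)/2 * exp (-l) + (1 + m)/2 * exp l ≤ exp (l^2/2 + l*m) := by
  obtain ⟨hm1, hm2⟩ := abs_le.mp hm
  set D : ℝ → ℝ := fun u => (1-m)/2 * exp (-u) + (1+m)/2 * exp u with hDdef
  set D' : ℝ → ℝ := fun u => -((1-m)/2 * exp (-u)) + (1+m)/2 * exp u with hD'def
  have hDpos : ∀ u, 0 < D u := by
    intro u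
    have e1 := exp_pos (-u); have e2 := exp_pos u
    rcases le_total m 0 with h | h
    · have h1 : (0:ℝ) < (1-m)/2 * exp (-u) := by nlinarith
      have h2 : (0:ℝ) ≤ (1+m)/2 * exp u := by nlinarith
      simp only [hDdef]; nlinarith
    · have h1 : (0:ℝ) ≤ (1-m)/2 * exp (-u) := by nlinarith
      have h2 : (0:ℝ) < (1+m)/2 * exp u := by nlinarith
      simp only [hDdef]; nlinarith
  have hDD : ∀ u, D u * D u - D' u * D' u = 1 - m^2 := by
    intro u
    have hne := (exp_pos u).ne'
    simp only [hDdef, hD'def, exp_neg]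
    field_simp
    ring
  have hD : ∀ u, HasDerivAt D (D' u) u := by
    intro u
    have h1 : HasDerivAt (fun u : ℝ => exp (-u)) (-exp (-u)) u := by
      simpa [Function.comp_def] using (Real.hasDerivAt_exp (-u)).comp u (hasDerivAt_neg u)
    have h2 := Real.hasDerivAt_exp u
    have := (h1.const_mul ((1-m)/2)).add (h2.const_mul ((1+m)/2))
    refine this.congr_deriv ?_
    simp only [hD'def]; ring
  have hD' : ∀ u, HasDerivAt D' (D u) u := by
    intro u
    have h1 : HasDerivAt (fun u : ℝ => exp (-u)) (-exp (-u)) u := by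
      simpa [Function.comp_def] using (Real.hasDerivAt_exp (-u)).comp u (hasDerivAt_neg u)
    have h2 := Real.hasDerivAt_exp u
    have := ((h1.const_mul ((1-m)/2)).neg).add (h2.const_mul ((1+m)/2))
    refine this.congr_deriv ?_
    simp only [hDdef]; ring
  set φ : ℝ → ℝ := fun u => u + m - D' u / D u with hφdef
  have hφ : ∀ u, HasDerivAt φ (1 - (1 - m^2)/(D u)^2) u := by
    intro u
    have hdiv : HasDerivAt (fun u => D' u / D u) ((D u * D u - D' u * D' u)/(D u)^2) u :=
      (hD' u).div (hD u) (hDpos u).ne'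
    rw [hDD u] at hdiv
    have := ((hasDerivAt_id u).add_const m).sub hdiv
    exact this
  have hφderiv_nonneg : ∀ u, 0 ≤ 1 - (1 - m^2)/(D u)^2 := by
    intro u
    rw [sub_nonneg, div_le_one (pow_pos (hDpos u) 2)]
    have h := hDD u
    nlinarith [sq_nonneg (D' u)]
  have hφmono : Monotone φ := by
    apply monotone_of_deriv_nonneg
    · exact fun u => (hφ u).differentiableAt
    · intro u; rw [(hφ u).deriv]; exact hφderiv_nonneg u
  have hφ0 : φ 0 = 0 := by
    simp only [hφdef, hDdef, hD'def, neg_zero, exp_zero]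
    field_simp
    ring
  have hφnonneg : ∀ u, 0 ≤ u → 0 ≤ φ u := fun u hu => hφ0 ▸ hφmono hu
  set g : ℝ → ℝ := fun u => u^2/2 + u*m - Real.log (D u) with hgdef
  have hg : ∀ u, HasDerivAt g (φ u) u := by
    intro u
    have hlog : HasDerivAt (fun u => Real.log (D u)) (D' u / D u) u :=
      (hD u).log (hDpos u).ne'
    have h1 : HasDerivAt (fun u : ℝ => u^2/2 + u*m) (u + m) u := by
      have := ((hasDerivAt_pow 2 u).div_const 2).add ((hasDerivAt_id u).mul_const m)
      refine this.congr_deriv ?_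
      norm_num
    exact h1.sub hlog
  have hgmono : MonotoneOn g (Set.Ici (0:ℝ)) :=
    monotoneOn_of_deriv_nonneg (convex_Ici 0)
      (fun u _ => (hg u).differentiableAt.continuousAt.continuousWithinAt)
      (fun u _ => (hg u).differentiableAt.differentiableWithinAt)
      (fun u hu => by rw [(hg u).deriv]; exact hφnonneg u (le_of_lt (by simpa using hu)))
  have hg0 : g 0 = 0 := by
    simp only [hgdef, hDdef, neg_zero, exp_zero, mul_one]
    rw [show (1-m)/2 + (1+m)/2 = (1:ℝ) by ring, Real.log_one]
    ring
  have hgl : 0 ≤ g l := by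
    rw [← hg0]
    exact hgmono (by simp) (by simpa using hl) hl
  have hlog : Real.log (D l) ≤ l^2/2 + l*m := by
    simp only [hgdef] at hgl; linarith
  show D l ≤ exp (l^2/2 + l*m)
  calc D l = exp (Real.log (D l)) := (Real.exp_log (hDpos l)).symm
    _ ≤ exp (l^2/2 + l*m) := exp_le_exp.mpr hlog

lemma key_all (m : ℝ) (hm : |m| ≤ 1) (l : ℝ) :
    (1 - m)/2 * exp (-l) + (1 + m)/2 * exp l ≤ exp (l^2/2 + l*m) := by
  rcases le_or_gt 0 l with h | h
  · exact key_nonneg m hm l h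
  · have h2 := key_nonneg (-m) (by rwa [abs_neg]) (-l) (by linarith)
    rw [neg_neg] at h2
    have e1 : (-l)^2/2 + -l*(-m) = l^2/2 + l*m := by ring
    rw [e1] at h2
    linarith [h2]

lemma chord (l z : ℝ) (hz : |z| ≤ 1) :
    exp (l * z) ≤ (1 - z)/2 * exp (-l) + (1 + z)/2 * exp l := by
  obtain ⟨h1, h2⟩ := abs_le.mp hz
  have h := convexOn_exp.2 (Set.mem_univ (-l)) (Set.mem_univ l)
    (show (0:ℝ) ≤ (1 - z)/2 by linarith) (show (0:ℝ) ≤ (1 + z)/2 by linarith)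
    (show (1 - z)/2 + (1 + z)/2 = 1 by ring)
  simp only [smul_eq_mul] at h
  rw [show (1-z)/2 * (-l) + (1+z)/2 * l = l * z by ring] at h
  exact h

lemma mgf_bound {n : ℕ} (p h : Fin n → ℝ) (hp0 : ∀ i, 0 ≤ p i) (hp1 : ∑ i, p i = 1)
    (hh : ∀ i, |h i| ≤ 1) (l : ℝ) :
    ∑ i, p i * exp (l * (h i - ∑ k, p k * h k)) ≤ exp (l^2/2) := by
  set μ := ∑ k, p k * h k with hμ
  have hμ1 : |μ| ≤ 1 := by
    rw [hμ]
    calc |∑ k, p k * h k| ≤ ∑ k, |p k * h k| := Finset.abs_sum_le_sum_abs _ _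
      _ ≤ ∑ k, p k := Finset.sum_le_sum (fun k _ => by
          rw [abs_mul, abs_of_nonneg (hp0 k)]
          calc p k * |h k| ≤ p k * 1 := by
                exact mul_le_mul_of_nonneg_left (hh k) (hp0 k)
            _ = p k := mul_one _)
      _ = 1 := hp1
  have step1 : ∑ i, p i * exp (l * (h i - μ)) ≤
      ((1 - μ)/2 * exp (-l) + (1 + μ)/2 * exp l) * exp (-(l*μ)) := by
    have expand : ∀ i, exp (l * (h i - μ)) = exp (l * h i) * exp (-(l*μ)) := by
      intro i; rw [← Real.exp_add]; ring_nf
    calc ∑ i, p i * exp (l * (h i - μ))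
        = (∑ i, p i * exp (l * h i)) * exp (-(l*μ)) := by
          rw [Finset.sum_mul]
          exact Finset.sum_congr rfl fun i _ => by rw [expand i]; ring
      _ ≤ ((1 - μ)/2 * exp (-l) + (1 + μ)/2 * exp l) * exp (-(l*μ)) := by
          apply mul_le_mul_of_nonneg_right _ (le_of_lt (exp_pos _))
          calc ∑ i, p i * exp (l * h i)
              ≤ ∑ i, p i * ((1 - h i)/2 * exp (-l) + (1 + h i)/2 * exp l) :=
                Finset.sum_le_sum (fun i _ =>
                  mul_le_mul_of_nonneg_left (chord l (h i) (hh i)) (hp0 i))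
            _ = (1 - μ)/2 * exp (-l) + (1 + μ)/2 * exp l := by
                have e : ∀ i, p i * ((1 - h i)/2 * exp (-l) + (1 + h i)/2 * exp l)
                    = (exp (-l)/2) * p i - (exp (-l)/2) * (p i * h i)
                      + ((exp l/2) * p i + (exp l/2) * (p i * h i)) := fun i => by ring
                simp only [e]
                rw [Finset.sum_add_distrib, Finset.sum_sub_distrib, Finset.sum_add_distrib,
                  ← Finset.mul_sum, ← Finset.mul_sum, ← Finset.mul_sum, ← Finset.mul_sum,
                  hp1, ← hμ]
                ring
  calc ∑ i, p i * exp (l * (h i - μ))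
      ≤ ((1 - μ)/2 * exp (-l) + (1 + μ)/2 * exp l) * exp (-(l*μ)) := step1
    _ ≤ exp (l^2/2 + l*μ) * exp (-(l*μ)) :=
        mul_le_mul_of_nonneg_right (key_all μ hμ1 l) (le_of_lt (exp_pos _))
    _ = exp (l^2/2) := by rw [← Real.exp_add]; ring_nf

lemma sum_prod_eq {n t : ℕ} (g : Fin n → ℝ) :
    ∑ a : Fin t → Fin n, ∏ s : Fin t, g (a s) = (∑ i, g i)^t := by
  have h := Finset.prod_univ_sum (fun _ : Fin t => (univ : Finset (Fin n))) (fun _ i => g i)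
  simp only [Fintype.piFinset_univ] at h
  rw [← h, Finset.prod_const, Finset.card_univ, Fintype.card_fin]

lemma sum_count {n t : ℕ} (a : Fin t → Fin n) (g : Fin n → ℝ) :
    ∑ i, ((univ.filter fun s => a s = i).card : ℝ) * g i = ∑ s, g (a s) := by
  have h : ∀ i : Fin n, ∑ s ∈ univ.filter (fun s => a s = i), g (a s)
      = ((univ.filter fun s => a s = i).card : ℝ) * g i := by
    intro i
    rw [Finset.sum_congr rfl (fun s hs => by rw [(Finset.mem_filter.mp hs).2]),
      Finset.sum_const, nsmul_eq_mul]
  rw [← Finset.sum_fiberwise univ a (fun s => g (a s))]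
  exact Finset.sum_congr rfl fun i _ => (h i).symm

lemma empDist_nonneg {n t : ℕ} (a : Fin t → Fin n) (i : Fin n) : 0 ≤ empDist n t a i := by
  unfold empDist; positivity

lemma empDist_sum {n t : ℕ} (ht : 0 < t) (a : Fin t → Fin n) :
    ∑ i, empDist n t a i = 1 := by
  unfold empDist
  rw [← Finset.sum_div]
  rw [show ∑ i, ((univ.filter fun s => a s = i).card : ℝ) = ∑ i, ((univ.filter fun s => a s = i).card : ℝ) * 1 by simp]
  rw [sum_count a (fun _ => (1:ℝ))]
  simp [Finset.card_univ]
  omega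

lemma empDist_dot {n t : ℕ} (ht : 0 < t) (a : Fin t → Fin n) (g : Fin n → ℝ) :
    ∑ i, g i * empDist n t a i = (∑ s, g (a s)) / t := by
  unfold empDist
  rw [show ∑ i, g i * (((univ.filter fun s => a s = i).card : ℝ)/t)
      = (∑ i, ((univ.filter fun s => a s = i).card : ℝ) * g i)/t by
    rw [Finset.sum_div]; exact Finset.sum_congr rfl fun i _ => by ring]
  rw [sum_count a g]

lemma empDist_pos_elim {n t : ℕ} (a : Fin t → Fin n) (i : Fin n)
    (h : 0 < empDist n t a i) : ∃ s, a s = i := by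
  unfold empDist at h
  have hc : (univ.filter fun s => a s = i).card ≠ 0 := by
    intro h0; rw [h0] at h; simp at h
  obtain ⟨s, hs⟩ := Finset.card_pos.mp (Nat.pos_of_ne_zero hc)
  exact ⟨s, (Finset.mem_filter.mp hs).2⟩

lemma chernoff {n t : ℕ} (p h : Fin n → ℝ) (hp0 : ∀ i, 0 ≤ p i) (hp1 : ∑ i, p i = 1)
    (hh : ∀ i, |h i| ≤ 1) (δ : ℝ) (hδ : 0 < δ) (Q : (Fin t → Fin n) → Prop)
    (hQ : ∀ a, Q a → (t:ℝ)*δ ≤ (∑ s, h (a s)) - (t:ℝ)*(∑ i, p i * h i)) :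
    ∑ a : Fin t → Fin n, (∏ s, p (a s)) * (if Q a then 1 else 0)
      ≤ exp (-(t:ℝ)*δ^2/2) := by
  set μ := ∑ i, p i * h i with hμ
  have step1 : ∀ a : Fin t → Fin n,
      (∏ s, p (a s)) * (if Q a then 1 else 0)
        ≤ exp (-(t:ℝ)*δ^2) * ∏ s, (p (a s) * exp (δ * (h (a s) - μ))) := by
    intro a
    have hprod : ∏ s, (p (a s) * exp (δ * (h (a s) - μ)))
        = (∏ s, p (a s)) * exp (δ * ((∑ s, h (a s)) - (t:ℝ)*μ)) := by
      rw [Finset.prod_mul_distrib, ← Real.exp_sum]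
      congr 1
      rw [← Finset.mul_sum, Finset.sum_sub_distrib, Finset.sum_const, Finset.card_univ,
        Fintype.card_fin, nsmul_eq_mul]
    rw [hprod]
    by_cases hq : Q a
    · simp only [hq, if_pos, mul_one]
      rw [mul_comm (exp _) _, mul_assoc]
      apply le_mul_of_one_le_right (Finset.prod_nonneg fun s _ => hp0 (a s))
      rw [← Real.exp_add]
      apply Real.one_le_exp
      nlinarith [hQ a hq]
    · simp only [hq, if_neg, mul_zero, not_false_iff]
      exact mul_nonneg (le_of_lt (exp_pos _))
        (mul_nonneg (Finset.prod_nonneg fun s _ => hp0 (a s)) (le_of_lt (exp_pos _)))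
  calc ∑ a : Fin t → Fin n, (∏ s, p (a s)) * (if Q a then 1 else 0)
      ≤ ∑ a : Fin t → Fin n, exp (-(t:ℝ)*δ^2) * ∏ s, (p (a s) * exp (δ * (h (a s) - μ))) :=
        Finset.sum_le_sum fun a _ => step1 a
    _ = exp (-(t:ℝ)*δ^2) * (∑ i, p i * exp (δ * (h i - μ)))^t := by
        rw [← Finset.mul_sum, ← sum_prod_eq (fun i => p i * exp (δ * (h i - μ)))]
    _ ≤ exp (-(t:ℝ)*δ^2) * exp (δ^2/2)^t := by
        apply mul_le_mul_of_nonneg_left _ (le_of_lt (exp_pos _))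
        apply pow_le_pow_left₀ (Finset.sum_nonneg fun i _ =>
          mul_nonneg (hp0 i) (le_of_lt (exp_pos _)))
        exact mgf_bound p h hp0 hp1 hh δ
    _ = exp (-(t:ℝ)*δ^2/2) := by
        rw [← Real.exp_nat_mul, ← Real.exp_add]
        congr 1
        ring

lemma chernoff_abs {n t : ℕ} (ht : 0 < t) (p h : Fin n → ℝ) (hp0 : ∀ i, 0 ≤ p i)
    (hp1 : ∑ i, p i = 1) (hh : ∀ i, |h i| ≤ 1) (δ : ℝ) (hδ : 0 < δ) :
    ∑ a : Fin t → Fin n, (∏ s, p (a s)) *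
      (if ¬ (|∑ i, h i * empDist n t a i - ∑ i, p i * h i| ≤ δ) then 1 else 0)
      ≤ 2 * exp (-(t:ℝ)*δ^2/2) := by
  set μ := ∑ i, p i * h i with hμ
  set Q1 : (Fin t → Fin n) → Prop := fun a => (t:ℝ)*δ ≤ (∑ s, h (a s)) - (t:ℝ)*μ with hQ1
  set Q2 : (Fin t → Fin n) → Prop :=
    fun a => (t:ℝ)*δ ≤ (∑ s, (fun i => -h i) (a s)) - (t:ℝ)*(∑ i, p i * (-h i)) with hQ2
  have htpos : (0:ℝ) < t := Nat.cast_pos.mpr ht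
  have hsplit : ∀ a : Fin t → Fin n,
      ¬ (|∑ i, h i * empDist n t a i - μ| ≤ δ) → Q1 a ∨ Q2 a := by
    intro a hna
    push_neg at hna
    rw [empDist_dot ht a h] at hna
    have hX : (t:ℝ) * δ < |(∑ s, h (a s)) - (t:ℝ)*μ| := by
      have : |(∑ s, h (a s))/t - μ| * t = |(∑ s, h (a s)) - (t:ℝ)*μ| := by
        rw [← abs_of_pos htpos, ← abs_mul]
        congr 1
        field_simp
        rw [abs_of_pos htpos]; ring
      calc (t:ℝ) * δ < |(∑ s, h (a s))/t - μ| * t := by nlinarith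
        _ = _ := this
    rcases abs_cases ((∑ s, h (a s)) - (t:ℝ)*μ) with ⟨he, _⟩ | ⟨he, _⟩
    · left; rw [hQ1]; dsimp only; linarith [he ▸ hX]
    · right; rw [hQ2]; dsimp only
      have e1 : ∑ s, -h (a s) = -∑ s, h (a s) := by rw [Finset.sum_neg_distrib]
      have e2 : ∑ i, p i * (-h i) = -μ := by
        rw [hμ, ← Finset.sum_neg_distrib]
        exact Finset.sum_congr rfl fun i _ => by ring
      rw [e1, e2]
      rw [he] at hX
      linarith
  have hpw : ∀ a : Fin t → Fin n,
      (∏ s, p (a s)) * (if ¬ (|∑ i, h i * empDist n t a i - μ| ≤ δ) then 1 else 0)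
      ≤ (∏ s, p (a s)) * (if Q1 a then 1 else 0)
        + (∏ s, p (a s)) * (if Q2 a then 1 else 0) := by
    intro a
    have hw : 0 ≤ ∏ s, p (a s) := Finset.prod_nonneg fun s _ => hp0 (a s)
    by_cases hna : ¬ (|∑ i, h i * empDist n t a i - μ| ≤ δ)
    · rcases hsplit a hna with hq | hq
      · rw [if_pos hna, if_pos hq, mul_one]
        have : (0:ℝ) ≤ (∏ s, p (a s)) * (if Q2 a then 1 else 0) := by
          split <;> simp [hw]
        linarith
      · rw [if_pos hna, if_pos hq, mul_one]
        have : (0:ℝ) ≤ (∏ s, p (a s)) * (if Q1 a then 1 else 0) := by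
          split <;> simp [hw]
        linarith
    · rw [if_neg hna, mul_zero]
      have h1 : (0:ℝ) ≤ (∏ s, p (a s)) * (if Q1 a then 1 else 0) := by
        split <;> simp [hw]
      have h2 : (0:ℝ) ≤ (∏ s, p (a s)) * (if Q2 a then 1 else 0) := by
        split <;> simp [hw]
      linarith
  calc ∑ a : Fin t → Fin n, (∏ s, p (a s)) *
        (if ¬ (|∑ i, h i * empDist n t a i - μ| ≤ δ) then 1 else 0)
      ≤ ∑ a : Fin t → Fin n, ((∏ s, p (a s)) * (if Q1 a then 1 else 0)
        + (∏ s, p (a s)) * (if Q2 a then 1 else 0)) :=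
        Finset.sum_le_sum fun a _ => hpw a
    _ = (∑ a : Fin t → Fin n, (∏ s, p (a s)) * (if Q1 a then 1 else 0))
        + ∑ a : Fin t → Fin n, (∏ s, p (a s)) * (if Q2 a then 1 else 0) :=
        Finset.sum_add_distrib
    _ ≤ exp (-(t:ℝ)*δ^2/2) + exp (-(t:ℝ)*δ^2/2) := by
        apply add_le_add
        · exact chernoff p h hp0 hp1 hh δ hδ Q1 (fun a ha => ha)
        · exact chernoff p (fun i => -h i) hp0 hp1 (fun i => by simpa using hh i) δ hδ Q2
            (fun a ha => ha)
    _ = 2 * exp (-(t:ℝ)*δ^2/2) := by ring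

lemma pure_row {n : ℕ} (R C : Matrix (Fin n) (Fin n) ℝ) (x y : Fin n → ℝ)
    (hxy : IsNash n R C x y) (i' : Fin n) :
    ∑ j, R i' j * y j ≤ ∑ i, ∑ j, x i * R i j * y j := by
  have hmix : IsMixed n (fun k => if k = i' then (1:ℝ) else 0) :=
    ⟨fun k => by dsimp only; split <;> norm_num, by simp⟩
  have h := hxy.1 _ hmix
  have e : ∀ i : Fin n, ∑ j, (if i = i' then (1:ℝ) else 0) * R i j * y j
      = if i = i' then ∑ j, R i j * y j else 0 := by
    intro i
    by_cases hi : i = i'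
    · simp [hi]
    · simp [hi]
  rw [Finset.sum_congr rfl (fun i _ => e i), Finset.sum_ite_eq' univ i'
    (fun i => ∑ j, R i j * y j)] at h
  simpa using h

lemma pure_col {n : ℕ} (R C : Matrix (Fin n) (Fin n) ℝ) (x y : Fin n → ℝ)
    (hxy : IsNash n R C x y) (j' : Fin n) :
    ∑ i, x i * C i j' ≤ ∑ i, ∑ j, x i * C i j * y j := by
  have hmix : IsMixed n (fun k => if k = j' then (1:ℝ) else 0) :=
    ⟨fun k => by dsimp only; split <;> norm_num, by simp⟩
  have h := hxy.2 _ hmix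
  have e : ∀ i : Fin n, ∑ j, x i * C i j * (if j = j' then (1:ℝ) else 0)
      = x i * C i j' := by
    intro i
    rw [Finset.sum_congr rfl (fun j _ => show x i * C i j * (if j = j' then (1:ℝ) else 0)
      = if j = j' then x i * C i j else 0 by split <;> simp),
      Finset.sum_ite_eq' univ j' (fun j => x i * C i j)]
    simp
  rw [Finset.sum_congr rfl (fun i _ => e i)] at h
  exact h

lemma supp_row {n : ℕ} (R C : Matrix (Fin n) (Fin n) ℝ) (x y : Fin n → ℝ)
    (hx : IsMixed n x) (hxy : IsNash n R C x y) (i : Fin n) (hxi : 0 < x i) :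
    ∑ j, R i j * y j = ∑ i, ∑ j, x i * R i j * y j := by
  set V := ∑ i, ∑ j, x i * R i j * y j with hV
  have hle : ∀ k : Fin n, ∑ j, R k j * y j ≤ V := fun k => pure_row R C x y hxy k
  have hVsum : ∑ k, x k * ∑ j, R k j * y j = V := by
    rw [hV]
    exact Finset.sum_congr rfl fun k _ => by
      rw [Finset.mul_sum]
      exact Finset.sum_congr rfl fun j _ => (mul_assoc _ _ _).symm
  have hzero : ∑ k, x k * (V - ∑ j, R k j * y j) = 0 := by
    have : ∀ k : Fin n, x k * (V - ∑ j, R k j * y j)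
        = V * x k - x k * ∑ j, R k j * y j := fun k => by ring
    rw [Finset.sum_congr rfl fun k _ => this k, Finset.sum_sub_distrib,
      ← Finset.mul_sum, hx.2, hVsum, mul_one, sub_self]
  have hterm := (Finset.sum_eq_zero_iff_of_nonneg (fun k _ =>
    mul_nonneg (hx.1 k) (sub_nonneg.mpr (hle k)))).mp hzero i (Finset.mem_univ i)
  have := mul_eq_zero.mp hterm
  rcases this with h | h
  · exact absurd h (ne_of_gt hxi)
  · linarith [sub_eq_zero.mp h]

lemma supp_col {n : ℕ} (R C : Matrix (Fin n) (Fin n) ℝ) (x y : Fin n → ℝ)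
    (hy : IsMixed n y) (hxy : IsNash n R C x y) (j : Fin n) (hyj : 0 < y j) :
    ∑ i, x i * C i j = ∑ i, ∑ j, x i * C i j * y j := by
  set V := ∑ i, ∑ j, x i * C i j * y j with hV
  have hle : ∀ k : Fin n, ∑ i, x i * C i k ≤ V := fun k => pure_col R C x y hxy k
  have hVsum : ∑ k, y k * ∑ i, x i * C i k = V := by
    rw [hV, Finset.sum_comm]
    exact Finset.sum_congr rfl fun k _ => by
      rw [Finset.mul_sum]
      exact Finset.sum_congr rfl fun i _ => by ring
  have hzero : ∑ k, y k * (V - ∑ i, x i * C i k) = 0 := by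
    have : ∀ k : Fin n, y k * (V - ∑ i, x i * C i k)
        = V * y k - y k * ∑ i, x i * C i k := fun k => by ring
    rw [Finset.sum_congr rfl fun k _ => this k, Finset.sum_sub_distrib,
      ← Finset.mul_sum, hy.2, hVsum, mul_one, sub_self]
  have hterm := (Finset.sum_eq_zero_iff_of_nonneg (fun k _ =>
    mul_nonneg (hy.1 k) (sub_nonneg.mpr (hle k)))).mp hzero j (Finset.mem_univ j)
  rcases mul_eq_zero.mp hterm with h | h
  · exact absurd h (ne_of_gt hyj)
  · linarith [sub_eq_zero.mp h]

/-- Lipton–Markakis–Mehta sampling: if `(x,y)` is a Nash equilibrium of a normalized game and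
`t ≥ 16 ln n / ε²`, then, sampling `t` i.i.d. pure strategies from `x` and `t` from `y`
(independently), with probability at least `1 − 4/n` the pair of empirical distributions is an
`ε`-well-supported Nash equilibrium whose payoff vectors are `ε/2`-close to those of `(x,y)`. -/
theorem stmt2 (n t : ℕ) (hn : 2 ≤ n) (ht : 0 < t)
    (R C : Matrix (Fin n) (Fin n) ℝ)
    (hR : ∀ i j, R i j ∈ Set.Icc (-1 : ℝ) 1) (hC : ∀ i j, C i j ∈ Set.Icc (-1 : ℝ) 1)
    (x y : Fin n → ℝ) (hx : IsMixed n x) (hy : IsMixed n y)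
    (hxy : IsNash n R C x y)
    (ε : ℝ) (hε : 0 < ε)
    (hts : 16 * Real.log n / ε ^ 2 ≤ t) :
    1 - 4 / (n : ℝ) ≤
      ∑ a : Fin t → Fin n, ∑ b : Fin t → Fin n,
        (if IsWSNE n R C ε (empDist n t a) (empDist n t b) ∧
            (∀ i, |∑ j, R i j * empDist n t b j - ∑ j, R i j * y j| ≤ ε / 2) ∧
            (∀ j, |∑ i, empDist n t a i * C i j - ∑ i, x i * C i j| ≤ ε / 2)
          then (∏ s, x (a s)) * ∏ s, y (b s) else 0) := by
  classical
  obtain ⟨hx0, hx1⟩ := hx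
  obtain ⟨hy0, hy1⟩ := hy
  have hnpos : (0:ℝ) < n := by
    have : (2:ℝ) ≤ n := by exact_mod_cast hn
    linarith
  set Cond : (Fin t → Fin n) → (Fin t → Fin n) → Prop := fun a b =>
    IsWSNE n R C ε (empDist n t a) (empDist n t b) ∧
      (∀ i, |∑ j, R i j * empDist n t b j - ∑ j, R i j * y j| ≤ ε / 2) ∧
      (∀ j, |∑ i, empDist n t a i * C i j - ∑ i, x i * C i j| ≤ ε / 2) with hCond
  set GA : (Fin t → Fin n) → Prop := fun a =>
    (∀ s, 0 < x (a s)) ∧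
      ∀ j, |∑ i, empDist n t a i * C i j - ∑ i, x i * C i j| ≤ ε / 2 with hGA
  set GB : (Fin t → Fin n) → Prop := fun b =>
    (∀ s, 0 < y (b s)) ∧
      ∀ i, |∑ j, R i j * empDist n t b j - ∑ j, R i j * y j| ≤ ε / 2 with hGB
  have hw1 : ∑ a : Fin t → Fin n, ∏ s, x (a s) = 1 := by
    rw [sum_prod_eq, hx1, one_pow]
  have hv1 : ∑ b : Fin t → Fin n, ∏ s, y (b s) = 1 := by
    rw [sum_prod_eq, hy1, one_pow]
  have hwa : ∀ a : Fin t → Fin n, 0 ≤ ∏ s, x (a s) :=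
    fun a => Finset.prod_nonneg fun s _ => hx0 (a s)
  have hva : ∀ b : Fin t → Fin n, 0 ≤ ∏ s, y (b s) :=
    fun b => Finset.prod_nonneg fun s _ => hy0 (b s)
  -- the deterministic implication
  have himp : ∀ a b, GA a → GB b → Cond a b := by
    intro a b hga hgb
    obtain ⟨haS, haC⟩ := hga
    obtain ⟨hbS, hbR⟩ := hgb
    refine ⟨⟨?_, ?_⟩, hbR, haC⟩
    · intro i i' hXi
      obtain ⟨s, hs⟩ := empDist_pos_elim a i hXi
      have hxi : 0 < x i := hs ▸ haS s
      have h1 : ∑ j, R i j * y j = ∑ k, ∑ j, x k * R k j * y j :=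
        supp_row R C x y ⟨hx0, hx1⟩ hxy i hxi
      have h2 : ∑ j, R i' j * y j ≤ ∑ k, ∑ j, x k * R k j * y j :=
        pure_row R C x y hxy i'
      have h3 := abs_le.mp (hbR i)
      have h4 := abs_le.mp (hbR i')
      have h3a := h3.1
      have h4b := h4.2
      rw [ge_iff_le]
      linarith
    · intro j j' hYj
      obtain ⟨s, hs⟩ := empDist_pos_elim b j hYj
      have hyj : 0 < y j := hs ▸ hbS s
      have h1 : ∑ i, x i * C i j = ∑ k, ∑ l, x k * C k l * y l :=
        supp_col R C x y ⟨hy0, hy1⟩ hxy j hyj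
      have h2 : ∑ i, x i * C i j' ≤ ∑ k, ∑ l, x k * C k l * y l :=
        pure_col R C x y hxy j'
      have h3 := abs_le.mp (haC j)
      have h4 := abs_le.mp (haC j')
      rw [ge_iff_le]
      linarith [h3.1, h4.2]
  -- arithmetic bound
  have harith : 2 * exp (-(t:ℝ)*(ε/2)^2/2) ≤ 2/(n:ℝ)^2 := by
    have hε2 : (0:ℝ) < ε^2 := by positivity
    have h1 : 16 * Real.log n ≤ t * ε^2 := by
      rw [div_le_iff₀ hε2] at hts; linarith
    have h2 : -(t:ℝ)*(ε/2)^2/2 ≤ -(2 * Real.log n) := by nlinarith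
    have h4 : exp (-(2*Real.log n)) = 1/(n:ℝ)^2 := by
      rw [show (2:ℝ)*Real.log n = Real.log ((n:ℝ)^2) by
        rw [Real.log_pow]; push_cast; ring]
      rw [Real.exp_neg, Real.exp_log (by positivity)]
      rw [one_div]
    have h3 := Real.exp_le_exp.mpr h2
    rw [h4] at h3
    have h5 := mul_le_mul_of_nonneg_left h3 (by norm_num : (0:ℝ) ≤ 2)
    calc 2 * exp (-(t:ℝ)*(ε/2)^2/2) ≤ 2 * (1/(n:ℝ)^2) := h5
      _ = 2/(n:ℝ)^2 := by ring
  -- column-side bound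
  have hIA : ∑ a : Fin t → Fin n, (if GA a then 0 else ∏ s, x (a s)) ≤ 2/(n:ℝ) := by
    have hpw : ∀ a : Fin t → Fin n, (if GA a then 0 else ∏ s, x (a s)) ≤
        ∑ j, (∏ s, x (a s)) *
          (if ¬(|∑ i, empDist n t a i * C i j - ∑ i, x i * C i j| ≤ ε/2) then 1 else 0) := by
      intro a
      have hnn : ∀ j : Fin n, (0:ℝ) ≤ (∏ s, x (a s)) *
          (if ¬(|∑ i, empDist n t a i * C i j - ∑ i, x i * C i j| ≤ ε/2) then 1 else 0) := by
        intro j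
        apply mul_nonneg (hwa a)
        split <;> norm_num
      by_cases hga : GA a
      · rw [if_pos hga]
        exact Finset.sum_nonneg fun j _ => hnn j
      · rw [if_neg hga]
        by_cases hsupp : ∀ s, 0 < x (a s)
        · have hex : ∃ j, ¬(|∑ i, empDist n t a i * C i j - ∑ i, x i * C i j| ≤ ε/2) := by
            by_contra hc
            push_neg at hc
            exact hga ⟨hsupp, fun j => hc j⟩
          obtain ⟨j0, hj0⟩ := hex
          calc ∏ s, x (a s)
              = (∏ s, x (a s)) *
                (if ¬(|∑ i, empDist n t a i * C i j0 - ∑ i, x i * C i j0| ≤ ε/2)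
                  then 1 else 0) := by rw [if_pos hj0, mul_one]
            _ ≤ _ := Finset.single_le_sum (fun j _ => hnn j) (Finset.mem_univ j0)
        · push_neg at hsupp
          obtain ⟨s0, hs0⟩ := hsupp
          have hz : ∏ s, x (a s) = 0 :=
            Finset.prod_eq_zero (Finset.mem_univ s0) (le_antisymm hs0 (hx0 _))
          exact le_trans (le_of_eq hz) (Finset.sum_nonneg fun j _ => hnn j)
    calc ∑ a : Fin t → Fin n, (if GA a then 0 else ∏ s, x (a s))
        ≤ ∑ a : Fin t → Fin n, ∑ j, (∏ s, x (a s)) *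
            (if ¬(|∑ i, empDist n t a i * C i j - ∑ i, x i * C i j| ≤ ε/2) then 1 else 0) :=
          Finset.sum_le_sum fun a _ => hpw a
      _ = ∑ j, ∑ a : Fin t → Fin n, (∏ s, x (a s)) *
            (if ¬(|∑ i, empDist n t a i * C i j - ∑ i, x i * C i j| ≤ ε/2) then 1 else 0) :=
          Finset.sum_comm
      _ ≤ ∑ _j : Fin n, 2 * exp (-(t:ℝ)*(ε/2)^2/2) := by
          apply Finset.sum_le_sum
          intro j _
          have e : ∀ a : Fin t → Fin n, ∑ i, empDist n t a i * C i j
              = ∑ i, C i j * empDist n t a i :=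
            fun a => Finset.sum_congr rfl fun i _ => mul_comm _ _
          simp only [e]
          exact chernoff_abs ht x (fun i => C i j) hx0 hx1
            (fun i => abs_le.mpr ⟨(hC i j).1, (hC i j).2⟩) (ε/2) (by positivity)
      _ = (n:ℝ) * (2 * exp (-(t:ℝ)*(ε/2)^2/2)) := by
          rw [Finset.sum_const, Finset.card_univ, Fintype.card_fin, nsmul_eq_mul]
      _ ≤ (n:ℝ) * (2/(n:ℝ)^2) := by
          exact mul_le_mul_of_nonneg_left harith (le_of_lt hnpos)
      _ = 2/(n:ℝ) := by field_simp
  -- row-side bound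
  have hIB : ∑ b : Fin t → Fin n, (if GB b then 0 else ∏ s, y (b s)) ≤ 2/(n:ℝ) := by
    have hpw : ∀ b : Fin t → Fin n, (if GB b then 0 else ∏ s, y (b s)) ≤
        ∑ i, (∏ s, y (b s)) *
          (if ¬(|∑ j, R i j * empDist n t b j - ∑ j, R i j * y j| ≤ ε/2) then 1 else 0) := by
      intro b
      have hnn : ∀ i : Fin n, (0:ℝ) ≤ (∏ s, y (b s)) *
          (if ¬(|∑ j, R i j * empDist n t b j - ∑ j, R i j * y j| ≤ ε/2) then 1 else 0) := by
        intro i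
        apply mul_nonneg (hva b)
        split <;> norm_num
      by_cases hgb : GB b
      · rw [if_pos hgb]
        exact Finset.sum_nonneg fun i _ => hnn i
      · rw [if_neg hgb]
        by_cases hsupp : ∀ s, 0 < y (b s)
        · have hex : ∃ i, ¬(|∑ j, R i j * empDist n t b j - ∑ j, R i j * y j| ≤ ε/2) := by
            by_contra hc
            push_neg at hc
            exact hgb ⟨hsupp, fun i => hc i⟩
          obtain ⟨i0, hi0⟩ := hex
          calc ∏ s, y (b s)
              = (∏ s, y (b s)) *
                (if ¬(|∑ j, R i0 j * empDist n t b j - ∑ j, R i0 j * y j| ≤ ε/2)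
                  then 1 else 0) := by rw [if_pos hi0, mul_one]
            _ ≤ _ := Finset.single_le_sum (fun i _ => hnn i) (Finset.mem_univ i0)
        · push_neg at hsupp
          obtain ⟨s0, hs0⟩ := hsupp
          have hz : ∏ s, y (b s) = 0 :=
            Finset.prod_eq_zero (Finset.mem_univ s0) (le_antisymm hs0 (hy0 _))
          exact le_trans (le_of_eq hz) (Finset.sum_nonneg fun i _ => hnn i)
    calc ∑ b : Fin t → Fin n, (if GB b then 0 else ∏ s, y (b s))
        ≤ ∑ b : Fin t → Fin n, ∑ i, (∏ s, y (b s)) *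
            (if ¬(|∑ j, R i j * empDist n t b j - ∑ j, R i j * y j| ≤ ε/2) then 1 else 0) :=
          Finset.sum_le_sum fun b _ => hpw b
      _ = ∑ i, ∑ b : Fin t → Fin n, (∏ s, y (b s)) *
            (if ¬(|∑ j, R i j * empDist n t b j - ∑ j, R i j * y j| ≤ ε/2) then 1 else 0) :=
          Finset.sum_comm
      _ ≤ ∑ _i : Fin n, 2 * exp (-(t:ℝ)*(ε/2)^2/2) := by
          apply Finset.sum_le_sum
          intro i _
          have e : ∑ j, y j * R i j = ∑ j, R i j * y j :=
            Finset.sum_congr rfl fun j _ => mul_comm _ _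
          have h := chernoff_abs ht y (fun j => R i j) hy0 hy1
            (fun j => abs_le.mpr ⟨(hR i j).1, (hR i j).2⟩) (ε/2) (by positivity)
          rw [e] at h
          exact h
      _ = (n:ℝ) * (2 * exp (-(t:ℝ)*(ε/2)^2/2)) := by
          rw [Finset.sum_const, Finset.card_univ, Fintype.card_fin, nsmul_eq_mul]
      _ ≤ (n:ℝ) * (2/(n:ℝ)^2) := by
          exact mul_le_mul_of_nonneg_left harith (le_of_lt hnpos)
      _ = 2/(n:ℝ) := by field_simp
  -- pointwise bound for bad terms
  have hpt : ∀ a b : Fin t → Fin n,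
      (if Cond a b then 0 else (∏ s, x (a s)) * ∏ s, y (b s)) ≤
        (if GA a then 0 else ∏ s, x (a s)) * (∏ s, y (b s))
          + (∏ s, x (a s)) * (if GB b then 0 else ∏ s, y (b s)) := by
    intro a b
    have h1 : (0:ℝ) ≤ (if GA a then 0 else ∏ s, x (a s)) * (∏ s, y (b s)) := by
      apply mul_nonneg _ (hva b)
      split
      · exact le_refl 0
      · exact hwa a
    have h2 : (0:ℝ) ≤ (∏ s, x (a s)) * (if GB b then 0 else ∏ s, y (b s)) := by
      apply mul_nonneg (hwa a)
      split
      · exact le_refl 0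
      · exact hva b
    by_cases hc : Cond a b
    · rw [if_pos hc]
      linarith
    · rw [if_neg hc]
      by_cases hga : GA a
      · by_cases hgb : GB b
        · exact absurd (himp a b hga hgb) hc
        · rw [if_neg hgb]
          linarith
      · rw [if_neg hga]
        linarith
  -- total bad probability
  have hBad : ∑ a : Fin t → Fin n, ∑ b : Fin t → Fin n,
      (if Cond a b then 0 else (∏ s, x (a s)) * ∏ s, y (b s)) ≤ 4/(n:ℝ) := by
    calc ∑ a : Fin t → Fin n, ∑ b : Fin t → Fin n,
          (if Cond a b then 0 else (∏ s, x (a s)) * ∏ s, y (b s))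
        ≤ ∑ a : Fin t → Fin n, ∑ b : Fin t → Fin n,
            ((if GA a then 0 else ∏ s, x (a s)) * (∏ s, y (b s))
              + (∏ s, x (a s)) * (if GB b then 0 else ∏ s, y (b s))) :=
          Finset.sum_le_sum fun a _ => Finset.sum_le_sum fun b _ => hpt a b
      _ = (∑ a : Fin t → Fin n, (if GA a then 0 else ∏ s, x (a s)))
            * (∑ b : Fin t → Fin n, ∏ s, y (b s))
          + (∑ a : Fin t → Fin n, ∏ s, x (a s))
            * (∑ b : Fin t → Fin n, (if GB b then 0 else ∏ s, y (b s))) := by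
          rw [Finset.sum_mul_sum, Finset.sum_mul_sum, ← Finset.sum_add_distrib]
          exact Finset.sum_congr rfl fun a _ => by rw [Finset.sum_add_distrib]
      _ = (∑ a : Fin t → Fin n, (if GA a then 0 else ∏ s, x (a s)))
          + (∑ b : Fin t → Fin n, (if GB b then 0 else ∏ s, y (b s))) := by
          rw [hv1, hw1, mul_one, one_mul]
      _ ≤ 2/(n:ℝ) + 2/(n:ℝ) := add_le_add hIA hIB
      _ = 4/(n:ℝ) := by ring
  have hWV : ∑ a : Fin t → Fin n, ∑ b : Fin t → Fin n,
      (∏ s, x (a s)) * ∏ s, y (b s) = 1 := by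
    rw [← Finset.sum_mul_sum, hw1, hv1, mul_one]
  have hEq : ∑ a : Fin t → Fin n, ∑ b : Fin t → Fin n,
      (if Cond a b then (∏ s, x (a s)) * ∏ s, y (b s) else 0)
      = 1 - ∑ a : Fin t → Fin n, ∑ b : Fin t → Fin n,
          (if Cond a b then 0 else (∏ s, x (a s)) * ∏ s, y (b s)) := by
    rw [← hWV, ← Finset.sum_sub_distrib]
    apply Finset.sum_congr rfl
    intro a _
    rw [← Finset.sum_sub_distrib]
    apply Finset.sum_congr rfl
    intro b _
    split <;> ring
  have hfinal : 1 - 4/(n:ℝ) ≤ ∑ a : Fin t → Fin n, ∑ b : Fin t → Fin n,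
      (if Cond a b then (∏ s, x (a s)) * ∏ s, y (b s) else 0) := by
    rw [hEq]
    linarith
  exact hfinal
end

section
/- Let (R,C) be a normalized bimatrix game with n pure strategies per player, let (x,y) be a Nash equilibrium of (R,C), and let ε > 0. Suppose 𝒳 and 𝒴 are mixed strategies such that: (a) 𝒳_i > 0 implies x_i > 0 for every i, and 𝒴_j > 0 implies y_j > 0 for every j; (b) |(R𝒴)_i − (Ry)_i| ≤ ε/2 for all i; (c) |(𝒳ᵀC)_j − (xᵀC)_j| ≤ ε/2 for all j. Then (𝒳,𝒴) is an ε-well-supported Nash equilibrium of (R,C). -/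
open Finset

lemma support_best (n : ℕ) (f x : Fin n → ℝ) (hx : IsMixed n x)
    (hub : ∀ k, f k ≤ ∑ k, x k * f k) (i : Fin n) (hi : 0 < x i) :
    ∀ i', f i' ≤ f i := by
  intro i'
  have hv : (∑ k, x k * f k) ≤ f i := by
    by_contra h
    push_neg at h
    have hlt : ∑ k, x k * f k < ∑ k, x k * (∑ k, x k * f k) := by
      apply Finset.sum_lt_sum
      · intro k _
        exact mul_le_mul_of_nonneg_left (hub k) (hx.1 k)
      · exact ⟨i, Finset.mem_univ i, by nlinarith [hub i]⟩
    rw [← Finset.sum_mul, hx.2, one_mul] at hlt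
    exact lt_irrefl _ hlt
  exact le_trans (hub i') hv

/-- If `(𝒳, 𝒴)` are mixed strategies supported inside the supports of a Nash equilibrium
`(x, y)` and whose payoff vectors are `ε/2`-close to those of `(x, y)`, then `(𝒳, 𝒴)` is an
`ε`-well-supported Nash equilibrium. -/
theorem stmt3 (n : ℕ) (R C : Matrix (Fin n) (Fin n) ℝ)
    (hR : ∀ i j, R i j ∈ Set.Icc (-1 : ℝ) 1) (hC : ∀ i j, C i j ∈ Set.Icc (-1 : ℝ) 1)
    (x y : Fin n → ℝ) (hx : IsMixed n x) (hy : IsMixed n y)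
    (hxy : IsNash n R C x y)
    (ε : ℝ) (hε : 0 < ε)
    (X Y : Fin n → ℝ) (hX : IsMixed n X) (hY : IsMixed n Y)
    (hsuppX : ∀ i, 0 < X i → 0 < x i)
    (hsuppY : ∀ j, 0 < Y j → 0 < y j)
    (hclose1 : ∀ i, |∑ j, R i j * Y j - ∑ j, R i j * y j| ≤ ε / 2)
    (hclose2 : ∀ j, |∑ i, X i * C i j - ∑ i, x i * C i j| ≤ ε / 2) :
    IsWSNE n R C ε X Y := by
  -- row player's payoff vector at y
  set f : Fin n → ℝ := fun i => ∑ j, R i j * y j with hf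
  set g : Fin n → ℝ := fun j => ∑ i, x i * C i j with hg
  have hubf : ∀ k, f k ≤ ∑ k, x k * f k := by
    intro k
    have := hxy.1 (fun i => if i = k then 1 else 0)
      ⟨fun i => by positivity, by simp⟩
    calc f k = ∑ i, ∑ j, (if i = k then (1:ℝ) else 0) * R i j * y j := by
          simp [hf, mul_assoc, ← Finset.mul_sum, ite_mul, Finset.sum_ite_eq']
      _ ≤ ∑ i, ∑ j, x i * R i j * y j := this
      _ = ∑ k, x k * f k := by
          simp only [hf, Finset.mul_sum, mul_assoc]
  have hubg : ∀ k, g k ≤ ∑ k, y k * g k := by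
    intro k
    have := hxy.2 (fun j => if j = k then 1 else 0)
      ⟨fun j => by positivity, by simp⟩
    calc g k = ∑ i, ∑ j, x i * C i j * (if j = k then (1:ℝ) else 0) := by
          simp [hg, Finset.sum_ite_eq']
      _ ≤ ∑ i, ∑ j, x i * C i j * y j := this
      _ = ∑ k, y k * g k := by
          rw [Finset.sum_comm]
          simp only [hg, Finset.mul_sum]
          congr 1; ext j; congr 1; ext i; ring
  constructor
  · intro i i' hXi
    have hbest := support_best n f x hx hubf i (hsuppX i hXi) i'
    have h1 := abs_le.mp (hclose1 i)
    have h2 := abs_le.mp (hclose1 i')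
    simp only [hf] at hbest
    linarith [h1.1, h2.2]
  · intro j j' hYj
    have hbest := support_best n g y hy hubg j (hsuppY j hYj) j'
    have h1 := abs_le.mp (hclose2 j)
    have h2 := abs_le.mp (hclose2 j')
    simp only [hg] at hbest
    linarith [h1.1, h2.2]
end

section
/- Let δ ∈ (0,1] and ε > 0, let (R,C) be a normalized bimatrix game with n ≥ 2 pure strategies per player, and let (x,y) be a Nash equilibrium of (R,C) such that x_i ≤ 1/(δn) for all i and y_j ≤ 1/(δn) for all j. Let t be a positive integer with t ≥ 16·ln(n)/ε². Define 𝒜 as the set of all ordered t-tuples A ∈ {1,…,n}^t whose empirical distribution 𝒳 (where 𝒳_i is the fraction of entries of A equal to i) satisfies |(𝒳ᵀC)_j − (xᵀC)_j| ≤ ε/2 for all j, and define ℬ as the set of all ordered t-tuples B ∈ {1,…,n}^t whose empirical distribution 𝒴 satisfies |(R𝒴)_i − (Ry)_i| ≤ ε/2 for all i. Then |𝒜| ≥ (1 − 4/n)·(δn)^t and |ℬ| ≥ (1 − 4/n)·(δn)^t. -/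
open Finset

open scoped Classical

/-- Sum over a `biUnion` of a nonnegative function is at most the sum of sums. -/
private lemma sum_biUnion_le_aux {ι α : Type*} [DecidableEq α] (s : Finset ι)
    (T : ι → Finset α) (f : α → ℝ) (hf : ∀ a, 0 ≤ f a) :
    ∑ a ∈ s.biUnion T, f a ≤ ∑ i ∈ s, ∑ a ∈ T i, f a := by
  classical
  induction s using Finset.induction with
  | empty => simp
  | insert _ _ hnotmem ih =>
    rename_i i s
    rw [Finset.biUnion_insert, Finset.sum_insert hnotmem]
    calc ∑ a ∈ T i ∪ s.biUnion T, f a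
        ≤ ∑ a ∈ T i, f a + ∑ a ∈ s.biUnion T, f a := by
          have h := Finset.sum_union_inter (s₁ := T i) (s₂ := s.biUnion T) (f := f)
          have h2 : 0 ≤ ∑ a ∈ T i ∩ s.biUnion T, f a :=
            Finset.sum_nonneg fun a _ => hf a
          linarith
      _ ≤ ∑ a ∈ T i, f a + ∑ i ∈ s, ∑ a ∈ T i, f a := by linarith

/-- Hoeffding's lemma for a finite discrete distribution with values in `[-1,1]`. -/
private lemma hoeff_mgf {n : ℕ} (x f : Fin n → ℝ) (hx0 : ∀ i, 0 ≤ x i) (hx1 : ∑ i, x i = 1)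
    (hf : ∀ i, |f i| ≤ 1) (lam : ℝ) :
    ∑ i, x i * Real.exp (lam * (f i - ∑ k, x k * f k)) ≤ Real.exp (lam ^ 2 / 2) := by
  set μ := ∑ k, x k * f k with hμ
  set z : Fin n → ℝ := fun i => f i - μ with hzdef
  set G : ℝ → ℝ := fun l => ∑ i, x i * Real.exp (l * z i) with hGdef
  set G1 : ℝ → ℝ := fun l => ∑ i, x i * z i * Real.exp (l * z i) with hG1def
  set G2 : ℝ → ℝ := fun l => ∑ i, x i * z i ^ 2 * Real.exp (l * z i) with hG2def
  have hG : ∀ l, HasDerivAt G (G1 l) l := by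
    intro l
    have : ∀ i ∈ univ, HasDerivAt (fun l : ℝ => x i * Real.exp (l * z i))
        (x i * z i * Real.exp (l * z i)) l := by
      intro i _
      have h1 : HasDerivAt (fun l : ℝ => l * z i) (z i) l := hasDerivAt_mul_const (z i)
      have h2 : HasDerivAt (fun l : ℝ => x i * Real.exp (l * z i))
          (x i * (Real.exp (l * z i) * z i)) l := (h1.exp).const_mul (x i)
      convert h2 using 1
      ring
    simpa using HasDerivAt.fun_sum this
  have hG1 : ∀ l, HasDerivAt G1 (G2 l) l := by
    intro l
    have : ∀ i ∈ univ, HasDerivAt (fun l : ℝ => x i * z i * Real.exp (l * z i))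
        (x i * z i ^ 2 * Real.exp (l * z i)) l := by
      intro i _
      have h1 : HasDerivAt (fun l : ℝ => l * z i) (z i) l := hasDerivAt_mul_const (z i)
      have h2 : HasDerivAt (fun l : ℝ => x i * z i * Real.exp (l * z i))
          (x i * z i * (Real.exp (l * z i) * z i)) l := (h1.exp).const_mul (x i * z i)
      convert h2 using 1
      ring
    simpa using HasDerivAt.fun_sum this
  have hxpos : ∃ i, 0 < x i := by
    by_contra hc
    push_neg at hc
    have : ∑ i, x i ≤ 0 := Finset.sum_nonpos fun i _ => hc i
    rw [hx1] at this; linarith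
  have hGpos : ∀ l, 0 < G l := by
    intro l
    obtain ⟨i, hi⟩ := hxpos
    exact Finset.sum_pos' (fun k _ => mul_nonneg (hx0 k) (Real.exp_pos _).le)
      ⟨i, Finset.mem_univ i, mul_pos hi (Real.exp_pos _)⟩
  have hvar : ∀ l, G2 l * G l - G1 l * G1 l ≤ G l * G l := by
    intro l
    set w : Fin n → ℝ := fun i => x i * Real.exp (l * z i) with hwdef
    have hw0 : ∀ i, 0 ≤ w i := fun i => mul_nonneg (hx0 i) (Real.exp_pos _).le
    set F1 : ℝ := ∑ i, w i * f i with hF1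
    set F2 : ℝ := ∑ i, w i * f i ^ 2 with hF2
    have hGw : G l = ∑ i, w i := rfl
    have e1 : G1 l = F1 - μ * G l := by
      calc G1 l = ∑ i, (w i * f i - μ * w i) :=
            Finset.sum_congr rfl fun i _ => by simp only [hwdef, hzdef]; ring
        _ = F1 - μ * G l := by rw [hF1, hGw, Finset.sum_sub_distrib, ← Finset.mul_sum]
    have e2 : G2 l = F2 - 2 * μ * F1 + μ ^ 2 * G l := by
      calc G2 l = ∑ i, (w i * f i ^ 2 - 2 * μ * (w i * f i) + μ ^ 2 * w i) :=
            Finset.sum_congr rfl fun i _ => by simp only [hwdef, hzdef]; ring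
        _ = F2 - 2 * μ * F1 + μ ^ 2 * G l := by
            rw [hF1, hF2, hGw, Finset.sum_add_distrib, Finset.sum_sub_distrib,
              ← Finset.mul_sum, ← Finset.mul_sum]
    have hF2le : F2 ≤ G l := by
      rw [hF2, hGw]
      refine Finset.sum_le_sum fun i _ => ?_
      have h1 : f i ^ 2 ≤ 1 := by
        have := abs_le.mp (hf i); nlinarith
      nlinarith [hw0 i]
    have hGnn : 0 ≤ G l := (hGpos l).le
    have hkey : G2 l * G l - G1 l * G1 l = F2 * G l - F1 * F1 := by
      rw [e1, e2]; ring
    nlinarith [sq_nonneg F1, mul_le_mul_of_nonneg_right hF2le hGnn]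
  set φ : ℝ → ℝ := fun l => l ^ 2 / 2 - Real.log (G l) with hφdef
  set φ1 : ℝ → ℝ := fun l => l - G1 l / G l with hφ1def
  have hφ : ∀ l, HasDerivAt φ (φ1 l) l := by
    intro l
    have h1 : HasDerivAt (fun l : ℝ => l ^ 2 / 2) l l := by
      have : HasDerivAt (fun x : ℝ => x ^ 2 / 2) ((↑2:ℝ) * l ^ (2 - 1) / 2) l :=
        (hasDerivAt_pow 2 l).div_const 2
      convert this using 1
      norm_num
    have h2 : HasDerivAt (fun l => Real.log (G l)) (G1 l / G l) l :=
      (hG l).log (hGpos l).ne'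
    exact h1.sub h2
  have hφ1 : ∀ l, HasDerivAt φ1 (1 - (G2 l * G l - G1 l * G1 l) / G l ^ 2) l := by
    intro l
    have h2 : HasDerivAt (fun l => G1 l / G l)
        ((G2 l * G l - G1 l * G1 l) / G l ^ 2) l :=
      (hG1 l).div (hG l) (hGpos l).ne'
    exact (hasDerivAt_id l).sub h2
  have hφ1mono : Monotone φ1 := by
    refine monotone_of_deriv_nonneg (fun l => (hφ1 l).differentiableAt) ?_
    intro l
    rw [(hφ1 l).deriv]
    have hG2 : (0:ℝ) < G l ^ 2 := pow_pos (hGpos l) 2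
    have := hvar l
    have : (G2 l * G l - G1 l * G1 l) / G l ^ 2 ≤ 1 := by
      rw [div_le_one hG2]; nlinarith
    linarith
  have hG10 : G1 0 = 0 := by
    have : G1 0 = ∑ i, x i * z i := by
      rw [hG1def]; simp
    rw [this]
    have : ∑ i, x i * z i = (∑ i, x i * f i) - (∑ i, x i) * μ := by
      rw [Finset.sum_mul, ← Finset.sum_sub_distrib]
      exact Finset.sum_congr rfl fun i _ => by simp only [hzdef]; ring
    rw [this, hx1, ← hμ]; ring
  have hφ10 : φ1 0 = 0 := by
    rw [hφ1def]; simp [hG10]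
  have hφ0 : φ 0 = 0 := by
    have : G 0 = 1 := by rw [hGdef]; simpa using hx1
    simp [hφdef, this]
  have hmain : ∀ l, 0 ≤ φ l := by
    have hdiffφ : Differentiable ℝ φ := fun l => (hφ l).differentiableAt
    intro l
    rcases le_total 0 l with hl | hl
    · have hmono := monotoneOn_of_deriv_nonneg (convex_Ici 0)
        hdiffφ.continuous.continuousOn
        (fun u _ => (hdiffφ u).differentiableWithinAt)
        (fun u hu => by
          rw [(hφ u).deriv]
          have : (0:ℝ) ≤ u := le_of_lt (by simpa using hu)
          have := hφ1mono this
          rw [hφ10] at this; linarith)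
      have := hmono (Set.self_mem_Ici) (by exact hl) hl
      rw [hφ0] at this; exact this
    · have hmono := antitoneOn_of_deriv_nonpos (convex_Iic 0)
        hdiffφ.continuous.continuousOn
        (fun u _ => (hdiffφ u).differentiableWithinAt)
        (fun u hu => by
          rw [(hφ u).deriv]
          have hu0 : u ≤ (0:ℝ) := le_of_lt (by simpa using hu)
          have := hφ1mono hu0
          rw [hφ10] at this; linarith)
      have := hmono (by exact hl) (Set.self_mem_Iic) hl
      rw [hφ0] at this; exact this
  have := hmain lam
  have hlog : Real.log (G lam) ≤ lam ^ 2 / 2 := by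
    rw [hφdef] at this; simp at this; linarith
  exact (Real.log_le_iff_le_exp (hGpos lam)).mp hlog

private lemma markov_one {n t : ℕ} (x f : Fin n → ℝ) (hx0 : ∀ i, 0 ≤ x i) (hx1 : ∑ i, x i = 1)
    (hf : ∀ i, |f i| ≤ 1) (ε : ℝ) (hε : 0 < ε) :
    ∑ A ∈ univ.filter (fun A : Fin t → Fin n =>
        (t : ℝ) * ε / 2 ≤ (∑ s, f (A s)) - t * ∑ k, x k * f k),
      ∏ s, x (A s) ≤ Real.exp (-((t : ℝ) * ε ^ 2) / 8) := by
  set μ := ∑ k, x k * f k with hμ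
  set lam := ε / 2 with hlam
  have hlam0 : 0 < lam := by positivity
  set h : Fin n → ℝ := fun i => x i * Real.exp (lam * (f i - μ)) with hhdef
  have hh0 : ∀ i, 0 ≤ h i := fun i => mul_nonneg (hx0 i) (Real.exp_pos _).le
  have hprodeq : ∀ A : Fin t → Fin n,
      ∏ s, h (A s)
        = (∏ s, x (A s)) * Real.exp (lam * ((∑ s, f (A s)) - t * μ)) := by
    intro A
    rw [hhdef]
    rw [Finset.prod_mul_distrib, ← Real.exp_sum]
    congr 1
    rw [← Finset.mul_sum]
    congr 1
    rw [Finset.sum_sub_distrib, Finset.sum_const, Finset.card_univ, Fintype.card_fin,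
      nsmul_eq_mul]
  have step1 : ∑ A ∈ univ.filter (fun A : Fin t → Fin n =>
        (t : ℝ) * ε / 2 ≤ (∑ s, f (A s)) - t * μ), ∏ s, x (A s)
      ≤ ∑ A ∈ univ.filter (fun A : Fin t → Fin n =>
        (t : ℝ) * ε / 2 ≤ (∑ s, f (A s)) - t * μ),
          Real.exp (-(lam * ((t : ℝ) * ε / 2))) * ∏ s, h (A s) := by
    refine Finset.sum_le_sum fun A hA => ?_
    rw [hprodeq A]
    have hA' := (Finset.mem_filter.mp hA).2
    have hw : 0 ≤ ∏ s, x (A s) := Finset.prod_nonneg fun s _ => hx0 _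
    have h1 : (1 : ℝ) ≤ Real.exp (-(lam * ((t : ℝ) * ε / 2))
        + lam * ((∑ s, f (A s)) - t * μ)) := by
      apply Real.one_le_exp
      nlinarith
    calc ∏ s, x (A s) = (∏ s, x (A s)) * 1 := (mul_one _).symm
      _ ≤ (∏ s, x (A s)) * Real.exp (-(lam * ((t : ℝ) * ε / 2))
            + lam * ((∑ s, f (A s)) - t * μ)) := by
          exact mul_le_mul_of_nonneg_left h1 hw
      _ = Real.exp (-(lam * ((t : ℝ) * ε / 2)))
            * ((∏ s, x (A s)) * Real.exp (lam * ((∑ s, f (A s)) - t * μ))) := by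
          rw [Real.exp_add]; ring
  have step2 : ∑ A ∈ univ.filter (fun A : Fin t → Fin n =>
        (t : ℝ) * ε / 2 ≤ (∑ s, f (A s)) - t * μ),
          Real.exp (-(lam * ((t : ℝ) * ε / 2))) * ∏ s, h (A s)
      ≤ Real.exp (-(lam * ((t : ℝ) * ε / 2))) * ∑ A : Fin t → Fin n, ∏ s, h (A s) := by
    rw [← Finset.mul_sum]
    refine mul_le_mul_of_nonneg_left ?_ (Real.exp_pos _).le
    refine Finset.sum_le_sum_of_subset_of_nonneg (Finset.filter_subset _ _)
      fun A _ _ => Finset.prod_nonneg fun s _ => hh0 _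
  have step3 : ∑ A : Fin t → Fin n, ∏ s, h (A s) = (∑ i, h i) ^ t :=
    (Fintype.sum_pow h t).symm
  have step4 : (∑ i, h i) ^ t ≤ Real.exp (lam ^ 2 / 2) ^ t := by
    refine pow_le_pow_left₀ (Finset.sum_nonneg fun i _ => hh0 i) ?_ t
    exact hoeff_mgf x f hx0 hx1 hf lam
  have step5 : Real.exp (-(lam * ((t : ℝ) * ε / 2))) * Real.exp (lam ^ 2 / 2) ^ t
      = Real.exp (-((t : ℝ) * ε ^ 2) / 8) := by
    rw [← Real.exp_nat_mul, ← Real.exp_add]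
    congr 1
    rw [hlam]; ring
  calc ∑ A ∈ univ.filter (fun A : Fin t → Fin n =>
        (t : ℝ) * ε / 2 ≤ (∑ s, f (A s)) - t * μ), ∏ s, x (A s)
      ≤ Real.exp (-(lam * ((t : ℝ) * ε / 2))) * ∑ A : Fin t → Fin n, ∏ s, h (A s) :=
        le_trans step1 step2
    _ = Real.exp (-(lam * ((t : ℝ) * ε / 2))) * (∑ i, h i) ^ t := by rw [step3]
    _ ≤ Real.exp (-(lam * ((t : ℝ) * ε / 2))) * Real.exp (lam ^ 2 / 2) ^ t := by
        exact mul_le_mul_of_nonneg_left step4 (Real.exp_pos _).le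
    _ = Real.exp (-((t : ℝ) * ε ^ 2) / 8) := step5

private lemma count_good {n t : ℕ} (hn : 2 ≤ n) (ht : 0 < t) (δ ε : ℝ) (hδ : 0 < δ)
    (hε : 0 < ε) (x : Fin n → ℝ) (hx0 : ∀ i, 0 ≤ x i) (hx1 : ∑ i, x i = 1)
    (hxs : ∀ i, x i ≤ 1 / (δ * n))
    (g : Fin n → Fin n → ℝ) (hg : ∀ j i, |g j i| ≤ 1)
    (hts : 16 * Real.log n / ε ^ 2 ≤ t) :
    (1 - 4 / (n : ℝ)) * (δ * n) ^ t ≤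
      ((univ.filter fun A : Fin t → Fin n =>
          ∀ j, |∑ i, empDist n t A i * g j i - ∑ i, x i * g j i| ≤ ε / 2).card : ℝ) := by
  have hn0 : (0 : ℝ) < n := by positivity
  have ht0 : (0 : ℝ) < t := by exact_mod_cast ht
  have hδn : (0 : ℝ) < δ * n := by positivity
  have hδnt : (0 : ℝ) < (δ * n) ^ t := by positivity
  set w : (Fin t → Fin n) → ℝ := fun A => ∏ s, x (A s) with hwdef
  have hw0 : ∀ A, 0 ≤ w A := fun A => Finset.prod_nonneg fun s _ => hx0 _
  -- empirical sums
  have hemp : ∀ (A : Fin t → Fin n) (v : Fin n → ℝ),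
      ∑ i, empDist n t A i * v i = (∑ s, v (A s)) / t := by
    intro A v
    have h1 : ∀ i : Fin n, ((univ.filter fun s => A s = i).card : ℝ) * v i
        = ∑ s ∈ univ.filter (fun s => A s = i), v i := by
      intro i; rw [Finset.sum_const, nsmul_eq_mul]
    calc ∑ i, empDist n t A i * v i
        = (∑ i, ((univ.filter fun s => A s = i).card : ℝ) * v i) / t := by
          rw [Finset.sum_div]
          exact Finset.sum_congr rfl fun i _ => by
            rw [empDist, div_mul_eq_mul_div]
      _ = (∑ s, v (A s)) / t := by
          rw [Finset.sum_congr rfl fun i _ => h1 i, Finset.sum_fiberwise']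
  -- convert the predicate
  have hpred : ∀ A : Fin t → Fin n,
      (∀ j, |∑ i, empDist n t A i * g j i - ∑ i, x i * g j i| ≤ ε / 2) ↔
      (∀ j, |(∑ s, g j (A s)) - t * (∑ i, x i * g j i)| ≤ (t : ℝ) * ε / 2) := by
    intro A
    refine forall_congr' fun j => ?_
    rw [hemp A (g j)]
    have e : (∑ s, g j (A s)) / t - (∑ i, x i * g j i)
        = ((∑ s, g j (A s)) - t * (∑ i, x i * g j i)) / t := by
      field_simp
    rw [e, abs_div, abs_of_pos ht0, div_le_iff₀ ht0]
    constructor <;> intro h' <;> linarith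
  set Q : (Fin t → Fin n) → Prop := fun A =>
    ∀ j, |(∑ s, g j (A s)) - t * (∑ i, x i * g j i)| ≤ (t : ℝ) * ε / 2 with hQ
  have hfe : (univ.filter fun A : Fin t → Fin n =>
      ∀ j, |∑ i, empDist n t A i * g j i - ∑ i, x i * g j i| ≤ ε / 2) = univ.filter Q :=
    Finset.filter_congr fun A _ => hpred A
  rw [hfe]
  -- total weight is 1
  have htot : ∑ A : Fin t → Fin n, w A = 1 := by
    rw [hwdef, ← Fintype.sum_pow x t, hx1, one_pow]
  -- the two one-sided bad sets for coordinate j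
  set S1 : Fin n → Finset (Fin t → Fin n) := fun j =>
    univ.filter (fun A => (t : ℝ) * ε / 2 ≤ (∑ s, g j (A s)) - t * (∑ i, x i * g j i)) with hS1
  set S2 : Fin n → Finset (Fin t → Fin n) := fun j =>
    univ.filter (fun A =>
      (t : ℝ) * ε / 2 ≤ (∑ s, -g j (A s)) - t * (∑ i, x i * -g j i)) with hS2
  set T : Fin n → Finset (Fin t → Fin n) := fun j => S1 j ∪ S2 j with hT
  have hside1 : ∀ j, ∑ A ∈ S1 j, w A ≤ Real.exp (-((t : ℝ) * ε ^ 2) / 8) := fun j =>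
    markov_one x (g j) hx0 hx1 (hg j) ε hε
  have hside2 : ∀ j, ∑ A ∈ S2 j, w A ≤ Real.exp (-((t : ℝ) * ε ^ 2) / 8) := fun j =>
    markov_one x (fun i => -g j i) hx0 hx1 (fun i => by rw [abs_neg]; exact hg j i) ε hε
  have hsub : univ.filter (fun A => ¬ Q A) ⊆ univ.biUnion T := by
    intro A hA
    have hnq := (Finset.mem_filter.mp hA).2
    simp only [hQ] at hnq
    push_neg at hnq
    obtain ⟨j, hj⟩ := hnq
    refine Finset.mem_biUnion.mpr ⟨j, Finset.mem_univ j, ?_⟩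
    rcases lt_abs.mp hj with h1 | h1
    · exact Finset.mem_union_left _ (Finset.mem_filter.mpr ⟨Finset.mem_univ _, h1.le⟩)
    · refine Finset.mem_union_right _ (Finset.mem_filter.mpr ⟨Finset.mem_univ _, ?_⟩)
      have e1 : ∑ s, -g j (A s) = -∑ s, g j (A s) := by
        rw [Finset.sum_neg_distrib]
      have e2 : ∑ i, x i * -g j i = -∑ i, x i * g j i := by
        simp [mul_neg]
      rw [e1, e2]
      linarith
  -- numeric: the exponential is at most 1/(n*n)
  have hn1 : (1 : ℝ) ≤ n := by exact_mod_cast Nat.one_le_of_lt hn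
  have hlogn : 0 ≤ Real.log n := Real.log_nonneg hn1
  have hts' : 16 * Real.log n ≤ t * ε ^ 2 := by
    rw [div_le_iff₀ (by positivity : (0:ℝ) < ε ^ 2)] at hts
    linarith
  have hexp : Real.exp (-((t : ℝ) * ε ^ 2) / 8) ≤ 1 / ((n : ℝ) * n) := by
    have h1 : -((t : ℝ) * ε ^ 2) / 8 ≤ -(2 * Real.log n) := by linarith
    calc Real.exp (-((t : ℝ) * ε ^ 2) / 8) ≤ Real.exp (-(2 * Real.log n)) :=
          Real.exp_le_exp.mpr h1
      _ = 1 / ((n : ℝ) * n) := by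
          rw [Real.exp_neg, two_mul, Real.exp_add, Real.exp_log hn0, one_div]
  have hbad : ∑ A ∈ univ.filter (fun A => ¬ Q A), w A ≤ 2 / n := by
    calc ∑ A ∈ univ.filter (fun A => ¬ Q A), w A
        ≤ ∑ A ∈ univ.biUnion T, w A :=
          Finset.sum_le_sum_of_subset_of_nonneg hsub fun A _ _ => hw0 A
      _ ≤ ∑ j, ∑ A ∈ T j, w A := sum_biUnion_le_aux univ T w hw0
      _ ≤ ∑ _j : Fin n, (Real.exp (-((t : ℝ) * ε ^ 2) / 8)
            + Real.exp (-((t : ℝ) * ε ^ 2) / 8)) := by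
          refine Finset.sum_le_sum fun j _ => ?_
          have h := Finset.sum_union_inter (s₁ := S1 j) (s₂ := S2 j) (f := w)
          have h0 : 0 ≤ ∑ A ∈ S1 j ∩ S2 j, w A := Finset.sum_nonneg fun A _ => hw0 A
          have := hside1 j
          have := hside2 j
          rw [hT]
          linarith
      _ = (n : ℝ) * (2 * Real.exp (-((t : ℝ) * ε ^ 2) / 8)) := by
          rw [Finset.sum_const, Finset.card_univ, Fintype.card_fin, nsmul_eq_mul]; ring
      _ ≤ (n : ℝ) * (2 * (1 / ((n : ℝ) * n))) := by
          refine mul_le_mul_of_nonneg_left ?_ hn0.le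
          linarith
      _ = 2 / n := by field_simp
  have hgood : 1 - 2 / (n : ℝ) ≤ ∑ A ∈ univ.filter Q, w A := by
    have hsplit := Finset.sum_filter_add_sum_filter_not univ Q w
    rw [htot] at hsplit
    linarith
  have hcard : ∑ A ∈ univ.filter Q, w A
      ≤ ((univ.filter Q).card : ℝ) * (1 / (δ * n)) ^ t := by
    have hb : ∀ A ∈ univ.filter Q, w A ≤ (1 / (δ * n)) ^ t := by
      intro A _
      calc w A ≤ ∏ _s : Fin t, (1 / (δ * n)) :=
            Finset.prod_le_prod (fun s _ => hx0 _) (fun s _ => hxs _)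
        _ = (1 / (δ * n)) ^ t := by
            rw [Finset.prod_const, Finset.card_univ, Fintype.card_fin]
    have := Finset.sum_le_card_nsmul (univ.filter Q) w ((1 / (δ * n)) ^ t) hb
    rwa [nsmul_eq_mul] at this
  have h2 : (1 - 2 / (n : ℝ)) * (δ * n) ^ t ≤ ((univ.filter Q).card : ℝ) := by
    have h1 : 1 - 2 / (n : ℝ) ≤ ((univ.filter Q).card : ℝ) * ((δ * n) ^ t)⁻¹ := by
      rw [one_div, inv_pow] at hcard
      linarith
    calc (1 - 2 / (n : ℝ)) * (δ * n) ^ t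
        ≤ ((univ.filter Q).card : ℝ) * ((δ * n) ^ t)⁻¹ * (δ * n) ^ t :=
          mul_le_mul_of_nonneg_right h1 hδnt.le
      _ = ((univ.filter Q).card : ℝ) := by field_simp
  calc (1 - 4 / (n : ℝ)) * (δ * n) ^ t ≤ (1 - 2 / (n : ℝ)) * (δ * n) ^ t := by
        refine mul_le_mul_of_nonneg_right ?_ hδnt.le
        have : 2 / (n : ℝ) ≤ 4 / n := by gcongr <;> norm_num
        linarith
    _ ≤ ((univ.filter Q).card : ℝ) := h2

/-- In a game of `δ`-small probabilities, the sets of "good" ordered `t`-tuples (those whose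
empirical distributions give payoff vectors `ε/2`-close to those of the small-probability Nash
equilibrium) have cardinality at least `(1 − 4/n)·(δn)^t`. -/
theorem stmt4 (δ ε : ℝ) (hδ : 0 < δ) (hδ1 : δ ≤ 1) (hε : 0 < ε)
    (n t : ℕ) (hn : 2 ≤ n) (ht : 0 < t)
    (R C : Matrix (Fin n) (Fin n) ℝ)
    (hR : ∀ i j, R i j ∈ Set.Icc (-1 : ℝ) 1) (hC : ∀ i j, C i j ∈ Set.Icc (-1 : ℝ) 1)
    (x y : Fin n → ℝ) (hx : IsMixed n x) (hy : IsMixed n y)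
    (hxy : IsNash n R C x y)
    (hxsmall : ∀ i, x i ≤ 1 / (δ * n)) (hysmall : ∀ j, y j ≤ 1 / (δ * n))
    (hts : 16 * Real.log n / ε ^ 2 ≤ t) :
    (1 - 4 / (n : ℝ)) * (δ * n) ^ t ≤
      ((univ.filter fun A : Fin t → Fin n =>
          ∀ j, |∑ i, empDist n t A i * C i j - ∑ i, x i * C i j| ≤ ε / 2).card : ℝ) ∧
    (1 - 4 / (n : ℝ)) * (δ * n) ^ t ≤
      ((univ.filter fun B : Fin t → Fin n =>
          ∀ i, |∑ j, R i j * empDist n t B j - ∑ j, R i j * y j| ≤ ε / 2).card : ℝ) := by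
  constructor
  · exact count_good hn ht δ ε hδ hε x hx.1 hx.2 hxsmall (fun j i => C i j)
      (fun j i => abs_le.mpr ⟨(hC i j).1, (hC i j).2⟩) hts
  · have h2 := count_good hn ht δ ε hδ hε y hy.1 hy.2 hysmall (fun i j => R i j)
      (fun i j => abs_le.mpr ⟨(hR i j).1, (hR i j).2⟩) hts
    have hfe : (univ.filter fun B : Fin t → Fin n =>
        ∀ i, |∑ j, R i j * empDist n t B j - ∑ j, R i j * y j| ≤ ε / 2)
        = (univ.filter fun B : Fin t → Fin n =>
        ∀ i, |∑ j, empDist n t B j * R i j - ∑ j, y j * R i j| ≤ ε / 2) := by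
      refine Finset.filter_congr fun B _ => ?_
      refine forall_congr' fun i => ?_
      rw [Finset.sum_congr rfl fun j _ => mul_comm (R i j) (empDist n t B j),
        Finset.sum_congr rfl fun j _ => mul_comm (R i j) (y j)]
    rw [hfe]
    exact h2
end

section
/- Let ℓ be an even positive integer, let n = C(ℓ, ℓ/2) (the binomial coefficient), let S ⊆ {1,…,n} with |S| = ℓ, and let S_1, …, S_n be a bijective enumeration of all subsets of S of cardinality ℓ/2. Define the n×n bimatrix game G_S = (R,C) by: for every column j, R_{ij} = −1 and C_{ij} = 1 for all i ∉ S; R_{ij} = 1 and C_{ij} = 0 for all i ∈ S_j; and R_{ij} = 0 and C_{ij} = 1 for all i ∈ S∖S_j. Then for every ε with 0 ≤ ε < 1 and every ε-well-supported Nash equilibrium (x,y) of G_S: (1) x_i = 0 for all i ∉ S; (2) Σ_{i=1}^n |x_i − (u_S)_i| ≤ 8ε, where u_S is the uniform distribution on S, i.e., (u_S)_i = 1/ℓ for i ∈ S and (u_S)_i = 0 otherwise. -/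
open Finset

/-- Select a "top `t`" subset of `V` with respect to the values `x`. -/
lemma exists_top_subset {α : Type*} [DecidableEq α] (x : α → ℝ) :
    ∀ (t : ℕ) (V : Finset α), t ≤ V.card →
    ∃ T, T ⊆ V ∧ T.card = t ∧ ∀ a ∈ T, ∀ b ∈ V \ T, x b ≤ x a := by
  intro t
  induction t with
  | zero => intro V _; exact ⟨∅, by simp, by simp, by simp⟩
  | succ t ih =>
    intro V ht
    obtain ⟨T, hTV, hTc, htop⟩ := ih V (le_trans (Nat.le_succ t) ht)
    have hne : (V \ T).Nonempty := by
      rw [← Finset.card_pos, Finset.card_sdiff_of_subset hTV, hTc]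
      omega
    obtain ⟨a₀, ha₀, hmax⟩ := Finset.exists_max_image (V \ T) x hne
    have ha₀V : a₀ ∈ V := (Finset.mem_sdiff.1 ha₀).1
    have ha₀T : a₀ ∉ T := (Finset.mem_sdiff.1 ha₀).2
    refine ⟨insert a₀ T, Finset.insert_subset ha₀V hTV, ?_, ?_⟩
    · rw [Finset.card_insert_of_notMem ha₀T, hTc]
    · intro a ha b hb
      have hb' : b ∈ V \ T := by
        rcases Finset.mem_sdiff.1 hb with ⟨hbV, hbI⟩
        exact Finset.mem_sdiff.2 ⟨hbV, fun h => hbI (Finset.mem_insert_of_mem h)⟩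
      rcases Finset.mem_insert.1 ha with rfl | haT
      · exact hmax b hb'
      · exact htop a haT b hb'

/-- In the Althöfer-style game `G_S`, in every `ε`-well-supported Nash equilibrium the row
player's strategy is supported on `S` and is `8ε`-close in `ℓ₁` distance to the uniform
distribution on `S`. -/
theorem stmt5 (ℓ : ℕ) (hℓ : 0 < ℓ) (hev : Even ℓ)
    (n : ℕ) (hn : n = Nat.choose ℓ (ℓ / 2))
    (S : Finset (Fin n)) (hS : S.card = ℓ)
    (Ssub : Fin n → Finset (Fin n))
    (hsub : ∀ j, Ssub j ⊆ S) (hcard : ∀ j, (Ssub j).card = ℓ / 2)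
    (hinj : Function.Injective Ssub)
    (hsurj : ∀ T : Finset (Fin n), T ⊆ S → T.card = ℓ / 2 → ∃ j, Ssub j = T)
    (R C : Matrix (Fin n) (Fin n) ℝ)
    (hR : ∀ i j, R i j = if i ∉ S then (-1 : ℝ) else if i ∈ Ssub j then 1 else 0)
    (hC : ∀ i j, C i j = if i ∉ S then (1 : ℝ) else if i ∈ Ssub j then 0 else 1)
    (ε : ℝ) (hε0 : 0 ≤ ε) (hε1 : ε < 1)
    (x y : Fin n → ℝ) (hx : IsMixed n x) (hy : IsMixed n y)
    (hxy : IsWSNE n R C ε x y) :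
    (∀ i, i ∉ S → x i = 0) ∧
    ∑ i, |x i - (if i ∈ S then (1 : ℝ) / ℓ else 0)| ≤ 8 * ε := by
  obtain ⟨hx0, hx1⟩ := hx
  obtain ⟨hy0, hy1⟩ := hy
  obtain ⟨hrow, hcol⟩ := hxy
  obtain ⟨m, hm⟩ := hev
  have hm2 : ℓ = 2 * m := by omega
  have hmd : ℓ / 2 = m := by omega
  have hm1 : 1 ≤ m := by omega
  have hmR : (0 : ℝ) < (m : ℝ) := by exact_mod_cast hm1
  have hℓR : (0 : ℝ) < (ℓ : ℝ) := by exact_mod_cast hℓ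
  have hℓm : (ℓ : ℝ) = 2 * (m : ℝ) := by exact_mod_cast hm2
  -- row payoffs
  set p : Fin n → ℝ := fun i => ∑ j, R i j * y j with hp
  have hprow : ∀ i i' : Fin n, 0 < x i → p i ≥ p i' - ε := hrow
  have hpS : ∀ i ∈ S, p i = ∑ j, (if i ∈ Ssub j then y j else 0) := by
    intro i hi
    refine Finset.sum_congr rfl fun j _ => ?_
    rw [hR]
    by_cases h : i ∈ Ssub j <;> simp [hi, h]
  have hpnn : ∀ i ∈ S, 0 ≤ p i := by
    intro i hi
    rw [hpS i hi]
    refine Finset.sum_nonneg fun j _ => ?_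
    by_cases h : i ∈ Ssub j <;> simp [h, hy0 j]
  have hSne : S.Nonempty := by rw [← Finset.card_pos, hS]; omega
  obtain ⟨i₀, hi₀⟩ := hSne
  -- support
  have hsupp : ∀ i, i ∉ S → x i = 0 := by
    intro i hi
    by_contra hne
    have hxi : 0 < x i := lt_of_le_of_ne (hx0 i) (Ne.symm hne)
    have h1 : p i = -1 := by
      have : p i = ∑ j, -(y j) := by
        refine Finset.sum_congr rfl fun j _ => ?_
        rw [hR]; simp [hi]
      rw [this, Finset.sum_neg_distrib, hy1]
    have h2 := hprow i i₀ hxi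
    have h3 : 0 ≤ p i₀ := hpnn i₀ hi₀
    rw [h1] at h2
    linarith
  have hmemx : ∀ i, 0 < x i → i ∈ S := by
    intro i hxi
    by_contra h
    rw [hsupp i h] at hxi
    exact lt_irrefl 0 hxi
  -- total mass on S is 1
  have hwS : ∑ i ∈ S, x i = 1 := by
    rw [Finset.sum_subset (Finset.subset_univ S) (fun i _ hi => hsupp i hi)]
    exact hx1
  -- sum of row payoffs over S
  have hpsum : ∑ i ∈ S, p i = (m : ℝ) := by
    have h0 : ∑ i ∈ S, p i = ∑ i ∈ S, ∑ j, (if i ∈ Ssub j then y j else 0) :=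
      Finset.sum_congr rfl hpS
    rw [h0, Finset.sum_comm]
    have hinner : ∀ j, ∑ i ∈ S, (if i ∈ Ssub j then y j else 0) = (m : ℝ) * y j := by
      intro j
      rw [Finset.sum_ite_mem, Finset.inter_eq_right.2 (hsub j), Finset.sum_const,
        hcard j, hmd, nsmul_eq_mul]
    rw [Finset.sum_congr rfl fun j _ => hinner j, ← Finset.mul_sum, hy1, mul_one]
  -- there is a strategy for the row player with payoff at least 1/2
  have histar : ∃ i ∈ S, (1 : ℝ) / 2 ≤ p i := by
    refine Finset.exists_le_of_sum_le ⟨i₀, hi₀⟩ ?_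
    rw [hpsum, Finset.sum_const, hS, nsmul_eq_mul, hℓm]
    linarith
  obtain ⟨is, hisS, his⟩ := histar
  -- key claim : every half-subset of S has weight at least 1/2 - 2ε
  have hkey : ∀ T ⊆ S, T.card = m → 1 / 2 - 2 * ε ≤ ∑ i ∈ T, x i := by
    intro T hTS hTc
    obtain ⟨jT, hjT⟩ := hsurj T hTS (by omega)
    -- column payoffs
    have hc : ∀ j, (∑ i, x i * C i j) = 1 - ∑ i ∈ Ssub j, x i := by
      intro j
      have h1 : ∑ i, x i * C i j = ∑ i ∈ S, x i * C i j :=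
        (Finset.sum_subset (Finset.subset_univ S)
          (fun i _ hi => by rw [hsupp i hi, zero_mul])).symm
      rw [h1]
      have h2 : ∀ i ∈ S, x i * C i j = x i - (if i ∈ Ssub j then x i else 0) := by
        intro i hi
        rw [hC]
        by_cases h : i ∈ Ssub j <;> simp [hi, h]
      rw [Finset.sum_congr rfl h2, Finset.sum_sub_distrib, hwS, Finset.sum_ite_mem,
        Finset.inter_eq_right.2 (hsub j)]
    -- every played column has weight at most w T + ε
    have hplayed : ∀ j, 0 < y j → ∑ i ∈ Ssub j, x i ≤ (∑ i ∈ T, x i) + ε := by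
      intro j hyj
      have := hcol j jT hyj
      rw [hc j, hc jT, hjT] at this
      linarith
    -- the average row payoff
    have hxp : ∑ i, x i * p i = ∑ j, (∑ i ∈ Ssub j, x i) * y j := by
      have h1 : ∑ i, x i * p i = ∑ j, ∑ i, x i * R i j * y j := by
        rw [← Finset.sum_comm]
        exact Finset.sum_congr rfl fun i _ => by
          rw [hp, Finset.mul_sum]
          exact Finset.sum_congr rfl fun j _ => by ring
      rw [h1]
      refine Finset.sum_congr rfl fun j _ => ?_
      rw [← Finset.sum_mul]
      congr 1
      have h2 : ∑ i, x i * R i j = ∑ i ∈ S, x i * R i j :=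
        (Finset.sum_subset (Finset.subset_univ S)
          (fun i _ hi => by rw [hsupp i hi, zero_mul])).symm
      rw [h2]
      have h3 : ∀ i ∈ S, x i * R i j = (if i ∈ Ssub j then x i else 0) := by
        intro i hi
        rw [hR]
        by_cases h : i ∈ Ssub j <;> simp [hi, h]
      rw [Finset.sum_congr rfl h3, Finset.sum_ite_mem, Finset.inter_eq_right.2 (hsub j)]
    -- lower bound on average row payoff
    have hlow : 1 / 2 - ε ≤ ∑ i, x i * p i := by
      have h1 : ∀ i : Fin n, x i * (1 / 2 - ε) ≤ x i * p i := by
        intro i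
        rcases eq_or_lt_of_le (hx0 i) with h | h
        · rw [← h]; simp
        · have hpi : p i ≥ p is - ε := hprow i is h
          have : 1 / 2 - ε ≤ p i := by linarith
          exact mul_le_mul_of_nonneg_left this (hx0 i)
      calc 1 / 2 - ε = (∑ i, x i) * (1 / 2 - ε) := by rw [hx1, one_mul]
        _ = ∑ i, x i * (1 / 2 - ε) := by rw [Finset.sum_mul]
        _ ≤ ∑ i, x i * p i := Finset.sum_le_sum fun i _ => h1 i
    -- upper bound
    have hup : ∑ j, (∑ i ∈ Ssub j, x i) * y j ≤ (∑ i ∈ T, x i) + ε := by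
      have h1 : ∀ j : Fin n, (∑ i ∈ Ssub j, x i) * y j ≤ ((∑ i ∈ T, x i) + ε) * y j := by
        intro j
        rcases eq_or_lt_of_le (hy0 j) with h | h
        · rw [← h]; simp
        · exact mul_le_mul_of_nonneg_right (hplayed j h) (hy0 j)
      calc ∑ j, (∑ i ∈ Ssub j, x i) * y j ≤ ∑ j, ((∑ i ∈ T, x i) + ε) * y j :=
            Finset.sum_le_sum fun j _ => h1 j
        _ = (∑ i ∈ T, x i) + ε := by rw [← Finset.mul_sum, hy1, mul_one]
    rw [hxp] at hlow
    linarith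
  -- complementary upper bound
  have hkey2 : ∀ T ⊆ S, T.card = m → ∑ i ∈ T, x i ≤ 1 / 2 + 2 * ε := by
    intro T hTS hTc
    have hc' : (S \ T).card = m := by
      rw [Finset.card_sdiff_of_subset hTS, hS, hTc]; omega
    have := hkey (S \ T) (Finset.sdiff_subset) hc'
    have hsd := Finset.sum_sdiff (f := x) hTS
    rw [hwS] at hsd
    linarith
  refine ⟨hsupp, ?_⟩
  -- the ℓ₁ distance
  set A : Finset (Fin n) := S.filter (fun i => 1 / (ℓ : ℝ) < x i) with hA
  have hAS : A ⊆ S := Finset.filter_subset _ _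
  have hzero : ∑ i ∈ S, (x i - 1 / (ℓ : ℝ)) = 0 := by
    rw [Finset.sum_sub_distrib, hwS, Finset.sum_const, hS, nsmul_eq_mul]
    field_simp
    norm_num
  have hdelta : ∑ i ∈ A, (x i - 1 / (ℓ : ℝ)) = ∑ i ∈ S \ A, (1 / (ℓ : ℝ) - x i) := by
    have hsd : ∑ i ∈ S \ A, (x i - 1 / (ℓ : ℝ)) + ∑ i ∈ A, (x i - 1 / (ℓ : ℝ))
        = ∑ i ∈ S, (x i - 1 / (ℓ : ℝ)) := Finset.sum_sdiff hAS
    rw [hzero] at hsd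
    have : ∑ i ∈ S \ A, (1 / (ℓ : ℝ) - x i) = -∑ i ∈ S \ A, (x i - 1 / (ℓ : ℝ)) := by
      rw [← Finset.sum_neg_distrib]
      exact Finset.sum_congr rfl fun i _ => by ring
    rw [this]
    linarith
  -- rewrite goal
  have hgoal : ∑ i, |x i - (if i ∈ S then (1 : ℝ) / ℓ else 0)|
      = 2 * ∑ i ∈ A, (x i - 1 / (ℓ : ℝ)) := by
    have h1 : ∑ i, |x i - (if i ∈ S then (1 : ℝ) / ℓ else 0)|
        = ∑ i ∈ S, |x i - (if i ∈ S then (1 : ℝ) / ℓ else 0)| :=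
      (Finset.sum_subset (Finset.subset_univ S)
        (fun i _ hi => by rw [hsupp i hi]; simp [hi])).symm
    have h2 : ∑ i ∈ S, |x i - (if i ∈ S then (1 : ℝ) / ℓ else 0)|
        = ∑ i ∈ S, |x i - 1 / (ℓ : ℝ)| :=
      Finset.sum_congr rfl fun i hi => by rw [if_pos hi]
    have h3 := Finset.sum_sdiff (f := fun i => |x i - 1 / (ℓ : ℝ)|) hAS
    have h4 : ∑ i ∈ A, |x i - 1 / (ℓ : ℝ)| = ∑ i ∈ A, (x i - 1 / (ℓ : ℝ)) :=
      Finset.sum_congr rfl fun i hi => by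
        have := (Finset.mem_filter.1 hi).2
        rw [abs_of_pos (by linarith)]
    have h5 : ∑ i ∈ S \ A, |x i - 1 / (ℓ : ℝ)| = ∑ i ∈ S \ A, (1 / (ℓ : ℝ) - x i) :=
      Finset.sum_congr rfl fun i hi => by
        rcases Finset.mem_sdiff.1 hi with ⟨hiS, hiA⟩
        have hle : ¬ (1 / (ℓ : ℝ) < x i) := fun h => hiA (Finset.mem_filter.2 ⟨hiS, h⟩)
        rw [abs_of_nonpos (by push_neg at hle; linarith), neg_sub]
    rw [h1, h2, ← h3, h4, h5, ← hdelta]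
    ring
  rw [hgoal]
  -- it remains to show the one-sided mass imbalance is at most 4ε
  suffices hδ : ∑ i ∈ A, (x i - 1 / (ℓ : ℝ)) ≤ 4 * ε by linarith
  obtain ⟨T, hTS, hTc, htopp⟩ := exists_top_subset x m S (by rw [hS]; omega)
  have hUc : (S \ T).card = m := by rw [Finset.card_sdiff_of_subset hTS, hS, hTc]; omega
  have hUS : S \ T ⊆ S := Finset.sdiff_subset
  have hTmass : ∑ i ∈ T, x i ≤ 1 / 2 + 2 * ε := hkey2 T hTS hTc
  have hUmass : 1 / 2 - 2 * ε ≤ ∑ i ∈ S \ T, x i := hkey (S \ T) hUS hUc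
  have hTne : T.Nonempty := by rw [← Finset.card_pos, hTc]; omega
  have hUne : (S \ T).Nonempty := by rw [← Finset.card_pos, hUc]; omega
  have hmhalf : (m : ℝ) * (1 / (ℓ : ℝ)) = 1 / 2 := by
    rw [hℓm]
    field_simp
  rcases le_or_gt A.card m with hk | hk
  · -- case |A| ≤ m : A ⊆ T
    have hAT : A ⊆ T := by
      intro a ha
      by_contra haT
      have haU : a ∈ S \ T := Finset.mem_sdiff.2 ⟨hAS ha, haT⟩
      have hxa : 1 / (ℓ : ℝ) < x a := (Finset.mem_filter.1 ha).2
      have hsubA : insert a T ⊆ A := by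
        intro t ht
        rcases Finset.mem_insert.1 ht with rfl | htT
        · exact ha
        · exact Finset.mem_filter.2 ⟨hTS htT, lt_of_lt_of_le hxa (htopp t htT a haU)⟩
      have := Finset.card_le_card hsubA
      rw [Finset.card_insert_of_notMem haT, hTc] at this
      omega
    -- lower bound on bottom-half elements
    obtain ⟨iw, hiwU, hiw⟩ : ∃ i ∈ S \ T, (1 / 2 - 2 * ε) / m ≤ x i := by
      refine Finset.exists_le_of_sum_le hUne ?_
      rw [Finset.sum_const, hUc, nsmul_eq_mul]
      rw [mul_div_cancel₀ _ (ne_of_gt hmR)]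
      exact hUmass
    have hsd : ∑ i ∈ T \ A, (x i - 1 / (ℓ : ℝ)) + ∑ i ∈ A, (x i - 1 / (ℓ : ℝ))
        = ∑ i ∈ T, (x i - 1 / (ℓ : ℝ)) := Finset.sum_sdiff hAT
    have hTsum : ∑ i ∈ T, (x i - 1 / (ℓ : ℝ)) ≤ 2 * ε := by
      rw [Finset.sum_sub_distrib, Finset.sum_const, hTc, nsmul_eq_mul, hmhalf]
      linarith
    have hTA : ∑ i ∈ T \ A, (x i - 1 / (ℓ : ℝ)) ≥ -(2 * ε) := by
      have hbound : ∀ i ∈ T \ A, -(2 * ε / m) ≤ x i - 1 / (ℓ : ℝ) := by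
        intro i hi
        have hiT : i ∈ T := (Finset.mem_sdiff.1 hi).1
        have h1 : x iw ≤ x i := htopp i hiT iw hiwU
        have h2 : (1 / 2 - 2 * ε) / m ≤ x i := le_trans hiw h1
        have hl : 1 / (ℓ : ℝ) = 1 / 2 / (m : ℝ) := by rw [hℓm]; ring
        have h3 : (1 / 2 - 2 * ε) / (m : ℝ) - 1 / 2 / (m : ℝ) = -(2 * ε / (m : ℝ)) := by ring
        rw [hl]
        linarith
      have := Finset.sum_le_card_nsmul (T \ A) (fun i => -(x i - 1 / (ℓ : ℝ))) (2 * ε / m)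
        (fun i hi => by have := hbound i hi; linarith)
      rw [Finset.sum_neg_distrib, nsmul_eq_mul] at this
      have hcardle : ((T \ A).card : ℝ) ≤ (m : ℝ) := by
        have hc2 : (T \ A).card ≤ T.card := Finset.card_le_card (Finset.sdiff_subset)
        rw [hTc] at hc2
        exact_mod_cast hc2
      have h2εm : 0 ≤ 2 * ε / m := by positivity
      have hmm : (m : ℝ) * (2 * ε / m) = 2 * ε := by field_simp
      have h4 : ((T \ A).card : ℝ) * (2 * ε / m) ≤ (m : ℝ) * (2 * ε / m) :=
        mul_le_mul_of_nonneg_right hcardle h2εm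
      linarith
    linarith
  · -- case m < |A| : S \ A ⊆ S \ T
    have hBU : S \ A ⊆ S \ T := by
      intro b hb
      rcases Finset.mem_sdiff.1 hb with ⟨hbS, hbA⟩
      refine Finset.mem_sdiff.2 ⟨hbS, fun hbT => ?_⟩
      have : ¬ A ⊆ T := fun h => by
        have := Finset.card_le_card h
        omega
      obtain ⟨a, haA, haT⟩ := Finset.not_subset.1 this
      have hxa : 1 / (ℓ : ℝ) < x a := (Finset.mem_filter.1 haA).2
      have : x a ≤ x b := htopp b hbT a (Finset.mem_sdiff.2 ⟨hAS haA, haT⟩)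
      have hble : ¬ (1 / (ℓ : ℝ) < x b) := fun h => hbA (Finset.mem_filter.2 ⟨hbS, h⟩)
      push_neg at hble
      linarith
    -- upper bound on bottom-half elements via min of top half
    obtain ⟨iw, hiwT, hiw⟩ : ∃ i ∈ T, x i ≤ (1 / 2 + 2 * ε) / m := by
      refine Finset.exists_le_of_sum_le hTne ?_
      rw [Finset.sum_const, hTc, nsmul_eq_mul, mul_div_cancel₀ _ (ne_of_gt hmR)]
      exact hTmass
    rw [hdelta]
    have hsd : ∑ i ∈ (S \ T) \ (S \ A), (1 / (ℓ : ℝ) - x i) + ∑ i ∈ S \ A, (1 / (ℓ : ℝ) - x i)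
        = ∑ i ∈ S \ T, (1 / (ℓ : ℝ) - x i) := Finset.sum_sdiff hBU
    have hUsum : ∑ i ∈ S \ T, (1 / (ℓ : ℝ) - x i) ≤ 2 * ε := by
      rw [Finset.sum_sub_distrib, Finset.sum_const, hUc, nsmul_eq_mul, hmhalf]
      linarith
    have hUB : ∑ i ∈ (S \ T) \ (S \ A), (1 / (ℓ : ℝ) - x i) ≥ -(2 * ε) := by
      have hbound : ∀ i ∈ (S \ T) \ (S \ A), -(2 * ε / m) ≤ 1 / (ℓ : ℝ) - x i := by
        intro i hi
        have hiU : i ∈ S \ T := (Finset.mem_sdiff.1 hi).1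
        have h1 : x i ≤ x iw := htopp iw hiwT i hiU
        have h2 : x i ≤ (1 / 2 + 2 * ε) / m := le_trans h1 hiw
        have hl : 1 / (ℓ : ℝ) = 1 / 2 / (m : ℝ) := by rw [hℓm]; ring
        have h3 : (1 / 2 + 2 * ε) / (m : ℝ) - 1 / 2 / (m : ℝ) = 2 * ε / (m : ℝ) := by ring
        rw [hl]
        linarith
      have := Finset.sum_le_card_nsmul ((S \ T) \ (S \ A))
        (fun i => -(1 / (ℓ : ℝ) - x i)) (2 * ε / m)
        (fun i hi => by have := hbound i hi; linarith)
      rw [Finset.sum_neg_distrib, nsmul_eq_mul] at this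
      have hcardle : (((S \ T) \ (S \ A)).card : ℝ) ≤ (m : ℝ) := by
        have h : ((S \ T) \ (S \ A)).card ≤ (S \ T).card :=
          Finset.card_le_card Finset.sdiff_subset
        rw [hUc] at h
        exact_mod_cast h
      have h2εm : 0 ≤ 2 * ε / m := by positivity
      have hmm : (m : ℝ) * (2 * ε / m) = 2 * ε := by field_simp
      have h4 : (((S \ T) \ (S \ A)).card : ℝ) * (2 * ε / m) ≤ (m : ℝ) * (2 * ε / m) :=
        mul_le_mul_of_nonneg_right hcardle h2εm
      linarith
    linarith
end

section
/- Let n be a positive integer, d ∈ {1,…,n}, and let p = (p_1,…,p_n), q = (q_1,…,q_n) ∈ [0,1]^n. Let X_1, …, X_n be independent random variables with X_i distributed as Bernoulli(p_i), and Y_1, …, Y_n independent with Y_i distributed as Bernoulli(q_i). Then the following two conditions are equivalent: (C_d) Σ_{i=1}^n p_i^ℓ = Σ_{i=1}^n q_i^ℓ for all ℓ = 1, …, d; (V_d) E[(Σ_{i=1}^n X_i)^ℓ] = E[(Σ_{i=1}^n Y_i)^ℓ] for all ℓ = 1, …, d. -/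
open Finset

/-- The `ℓ`-th moment `E[(∑ Xᵢ)^ℓ]` of a sum of `n` independent Bernoulli random variables
with success probabilities `p 0, …, p (n-1)`. -/
noncomputable def sumBernMoment (n : ℕ) (p : Fin n → ℝ) (ℓ : ℕ) : ℝ :=
  ∑ S ∈ (Finset.univ : Finset (Fin n)).powerset,
    ((∏ i ∈ S, p i) * ∏ i ∈ Sᶜ, (1 - p i)) * (S.card : ℝ) ^ ℓ

namespace Stmt9Aux

open Polynomial

variable {n : ℕ}

/-- The weight (probability) of the outcome where exactly the indicators in `S` equal one. -/
noncomputable def bw (n : ℕ) (p : Fin n → ℝ) (S : Finset (Fin n)) : ℝ :=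
  (∏ i ∈ S, p i) * ∏ i ∈ Sᶜ, (1 - p i)

/-- The `k`-th elementary symmetric function of `p`. -/
noncomputable def esym (n : ℕ) (p : Fin n → ℝ) (k : ℕ) : ℝ :=
  ∑ T ∈ powersetCard k (univ : Finset (Fin n)), ∏ i ∈ T, p i

lemma marg (p : Fin n → ℝ) (T : Finset (Fin n)) :
    ∑ S ∈ (univ : Finset (Fin n)).powerset with T ⊆ S, bw n p S = ∏ i ∈ T, p i := by
  have h1 : ∑ U ∈ Tᶜ.powerset, (∏ i ∈ U, p i) * ∏ i ∈ Tᶜ \ U, (1 - p i) = 1 := by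
    rw [← prod_add]; simp
  have key : ∑ S ∈ (univ : Finset (Fin n)).powerset with T ⊆ S, bw n p S
      = ∑ U ∈ Tᶜ.powerset, (∏ i ∈ T, p i) * ((∏ i ∈ U, p i) * ∏ i ∈ Tᶜ \ U, (1 - p i)) := by
    apply sum_nbij' (i := fun S => S \ T) (j := fun U => T ∪ U)
    · intro S hS
      simp only [mem_filter, mem_powerset] at hS
      simp only [mem_powerset]
      intro x hx
      simp only [mem_sdiff] at hx
      simp [hx.2]
    · intro U hU
      simp only [mem_powerset] at hU ⊢
      simp [mem_filter, subset_union_left]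
    · intro S hS
      simp only [mem_filter, mem_powerset] at hS
      exact Finset.union_sdiff_of_subset hS.2
    · intro U hU
      simp only [mem_powerset] at hU
      rw [Finset.union_sdiff_cancel_left]
      rw [Finset.disjoint_left]
      intro x hxT hxU
      have := hU hxU
      simp at this
      exact this hxT
    · intro S hS
      simp only [mem_filter, mem_powerset] at hS
      have hprod : ∏ i ∈ S, p i = (∏ i ∈ T, p i) * ∏ i ∈ S \ T, p i := by
        rw [mul_comm, Finset.prod_sdiff hS.2]
      have hcompl : Sᶜ = Tᶜ \ (S \ T) := by
        ext x
        simp only [mem_compl, mem_sdiff]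
        constructor
        · intro hx
          exact ⟨fun hT => hx (hS.2 hT), fun h => hx h.1⟩
        · rintro ⟨hT, h⟩ hxS
          exact h ⟨hxS, hT⟩
      rw [bw, hprod, hcompl]
      ring
  rw [key, ← mul_sum, h1, mul_one]

lemma total (p : Fin n → ℝ) :
    ∑ S ∈ (univ : Finset (Fin n)).powerset, bw n p S = 1 := by
  have := marg p ∅
  simpa [filter_true_of_mem] using this

lemma bE_choose (p : Fin n → ℝ) (k : ℕ) :
    ∑ S ∈ (univ : Finset (Fin n)).powerset, bw n p S * (S.card.choose k : ℝ)
      = esym n p k := by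
  have hchoose : ∀ S : Finset (Fin n), ((S.card.choose k : ℝ))
      = ∑ T ∈ powersetCard k (univ : Finset (Fin n)), if T ⊆ S then (1:ℝ) else 0 := by
    intro S
    symm
    rw [Finset.sum_boole]
    have hfil : {T ∈ powersetCard k (univ : Finset (Fin n)) | T ⊆ S} = powersetCard k S := by
      ext T
      simp only [mem_filter, mem_powersetCard, mem_powersetCard]
      constructor
      · rintro ⟨⟨-, h2⟩, h3⟩; exact ⟨h3, h2⟩
      · rintro ⟨h1, h2⟩; exact ⟨⟨subset_univ _, h2⟩, h1⟩
    rw [hfil, Finset.card_powersetCard]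
  calc ∑ S ∈ (univ : Finset (Fin n)).powerset, bw n p S * (S.card.choose k : ℝ)
      = ∑ S ∈ (univ : Finset (Fin n)).powerset, ∑ T ∈ powersetCard k (univ : Finset (Fin n)),
          (if T ⊆ S then bw n p S else 0) := by
        apply sum_congr rfl
        intro S _
        rw [hchoose, mul_sum]
        apply sum_congr rfl
        intro T _
        split <;> simp
    _ = ∑ T ∈ powersetCard k (univ : Finset (Fin n)), ∑ S ∈ (univ : Finset (Fin n)).powerset,
          (if T ⊆ S then bw n p S else 0) := sum_comm
    _ = ∑ T ∈ powersetCard k (univ : Finset (Fin n)), ∏ i ∈ T, p i := by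
        apply sum_congr rfl
        intro T _
        rw [← sum_filter]
        exact marg p T
    _ = esym n p k := rfl

lemma newton_rel (p : Fin n → ℝ) (k : ℕ) (h : 0 < k) :
    ∑ i, p i ^ k = (-1)^(k+1) * k * esym n p k -
      ∑ a ∈ (Finset.HasAntidiagonal.antidiagonal k).filter (fun a => a.1 ∈ Set.Ioo 0 k),
        (-1)^a.1 * esym n p a.1 * (∑ i, p i ^ a.2) := by
  have h0 := MvPolynomial.psum_eq_mul_esymm_sub_sum (Fin n) ℝ k h
  have h1 := congrArg (MvPolynomial.aeval p) h0
  simp only [MvPolynomial.psum, MvPolynomial.esymm, map_sum, map_sub, map_mul, map_pow,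
    MvPolynomial.aeval_X, map_prod, map_neg, map_one, map_natCast] at h1
  simpa [esym] using h1

lemma degQ (ℓ : ℕ) (hℓ : 1 ≤ ℓ) :
    ((X : ℝ[X])^ℓ - descPochhammer ℝ ℓ).natDegree < ℓ := by
  by_cases hQ : (X : ℝ[X])^ℓ - descPochhammer ℝ ℓ = 0
  · rw [hQ]; simp; omega
  · have hdeg : ((X : ℝ[X])^ℓ - descPochhammer ℝ ℓ).degree < ((ℓ : ℕ) : WithBot ℕ) := by
      have := Polynomial.degree_sub_lt (p := (X : ℝ[X])^ℓ) (q := descPochhammer ℝ ℓ)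
        (by rw [degree_X_pow, Polynomial.degree_eq_natDegree (monic_descPochhammer ℝ ℓ).ne_zero,
              descPochhammer_natDegree])
        (pow_ne_zero _ Polynomial.X_ne_zero)
        (by rw [(monic_descPochhammer ℝ ℓ).leadingCoeff, Polynomial.leadingCoeff_X_pow])
      simpa using this
    exact (Polynomial.natDegree_lt_iff_degree_lt hQ).mpr hdeg

lemma moment_rel (p : Fin n → ℝ) (ℓ : ℕ) (hℓ : 1 ≤ ℓ) :
    sumBernMoment n p ℓ = (Nat.factorial ℓ : ℝ) * esym n p ℓ +
      ∑ k ∈ range ℓ, ((X : ℝ[X])^ℓ - descPochhammer ℝ ℓ).coeff k * sumBernMoment n p k := by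
  set Q := (X : ℝ[X])^ℓ - descPochhammer ℝ ℓ with hQdef
  have hpt : ∀ x : ℕ, ((x : ℝ))^ℓ
      = (x.descFactorial ℓ : ℝ) + ∑ k ∈ range ℓ, Q.coeff k * (x:ℝ)^k := by
    intro x
    have hev : Q.eval (x:ℝ) = ∑ k ∈ range ℓ, Q.coeff k * (x:ℝ)^k :=
      Polynomial.eval_eq_sum_range' (degQ ℓ hℓ) _
    have h2 : Q.eval (x:ℝ) = (x:ℝ)^ℓ - (x.descFactorial ℓ : ℝ) := by
      simp [hQdef, descPochhammer_eval_eq_descFactorial]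
    rw [h2] at hev
    linarith
  have hA : ∑ S ∈ (univ : Finset (Fin n)).powerset, bw n p S * (S.card.descFactorial ℓ : ℝ)
      = (Nat.factorial ℓ : ℝ) * esym n p ℓ := by
    rw [← bE_choose p ℓ, mul_sum]
    apply sum_congr rfl
    intro S _
    rw [Nat.descFactorial_eq_factorial_mul_choose]
    push_cast
    ring
  have hB : sumBernMoment n p ℓ
      = ∑ S ∈ (univ : Finset (Fin n)).powerset, bw n p S * ((S.card : ℝ))^ℓ := rfl
  rw [hB]
  calc ∑ S ∈ (univ : Finset (Fin n)).powerset, bw n p S * ((S.card : ℝ))^ℓ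
      = ∑ S ∈ (univ : Finset (Fin n)).powerset,
          (bw n p S * (S.card.descFactorial ℓ : ℝ)
            + ∑ k ∈ range ℓ, Q.coeff k * (bw n p S * (S.card : ℝ)^k)) := by
        apply sum_congr rfl
        intro S _
        rw [hpt S.card, mul_add, mul_sum]
        congr 1
        apply sum_congr rfl
        intro k _
        ring
    _ = (∑ S ∈ (univ : Finset (Fin n)).powerset, bw n p S * (S.card.descFactorial ℓ : ℝ))
        + ∑ k ∈ range ℓ, Q.coeff k *
            ∑ S ∈ (univ : Finset (Fin n)).powerset, bw n p S * (S.card : ℝ)^k := by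
        rw [sum_add_distrib]
        congr 1
        rw [sum_comm]
        apply sum_congr rfl
        intro k _
        rw [mul_sum]
    _ = (Nat.factorial ℓ : ℝ) * esym n p ℓ
        + ∑ k ∈ range ℓ, Q.coeff k * sumBernMoment n p k := by
        rw [hA]
        simp only [sumBernMoment, bw]

lemma triangular (d : ℕ) (a a' b b' c : ℕ → ℝ)
    (hc : ∀ ℓ, 1 ≤ ℓ → ℓ ≤ d → c ℓ ≠ 0)
    (ha0 : a 0 = a' 0) (hb0 : b 0 = b' 0)
    (H : ∀ ℓ, 1 ≤ ℓ → ℓ ≤ d → (∀ k, k < ℓ → a k = a' k) → (∀ k, k < ℓ → b k = b' k) →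
      b ℓ - c ℓ * a ℓ = b' ℓ - c ℓ * a' ℓ) :
    (∀ ℓ, 1 ≤ ℓ → ℓ ≤ d → a ℓ = a' ℓ) ↔ (∀ ℓ, 1 ≤ ℓ → ℓ ≤ d → b ℓ = b' ℓ) := by
  constructor
  · intro hA
    have key : ∀ ℓ, ℓ ≤ d → b ℓ = b' ℓ := by
      intro ℓ
      induction ℓ using Nat.strong_induction_on with
      | _ ℓ ih =>
        intro hℓd
        rcases Nat.eq_zero_or_pos ℓ with h0 | h1
        · subst h0; exact hb0
        · have ha : ∀ k, k < ℓ → a k = a' k := by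
            intro k hk
            rcases Nat.eq_zero_or_pos k with hk0 | hk1
            · subst hk0; exact ha0
            · exact hA k hk1 (le_trans hk.le hℓd)
          have hb : ∀ k, k < ℓ → b k = b' k := fun k hk => ih k hk (le_trans hk.le hℓd)
          have hH := H ℓ h1 hℓd ha hb
          rw [hA ℓ h1 hℓd] at hH
          exact sub_left_inj.mp hH
    exact fun ℓ _ h2 => key ℓ h2
  · intro hB
    have key : ∀ ℓ, ℓ ≤ d → a ℓ = a' ℓ := by
      intro ℓ
      induction ℓ using Nat.strong_induction_on with
      | _ ℓ ih =>
        intro hℓd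
        rcases Nat.eq_zero_or_pos ℓ with h0 | h1
        · subst h0; exact ha0
        · have ha : ∀ k, k < ℓ → a k = a' k := fun k hk => ih k hk (le_trans hk.le hℓd)
          have hb : ∀ k, k < ℓ → b k = b' k := by
            intro k hk
            rcases Nat.eq_zero_or_pos k with hk0 | hk1
            · subst hk0; exact hb0
            · exact hB k hk1 (le_trans hk.le hℓd)
          have hH := H ℓ h1 hℓd ha hb
          rw [hB ℓ h1 hℓd] at hH
          have hmul : c ℓ * a ℓ = c ℓ * a' ℓ := by linarith
          exact mul_left_cancel₀ (hc ℓ h1 hℓd) hmul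
    exact fun ℓ _ h2 => key ℓ h2

end Stmt9Aux

/-- For sums of independent Bernoulli indicators, equality of the power sums of the
expectations up to degree `d` is equivalent to equality of the first `d` moments of the sums. -/
theorem stmt9 (n : ℕ) (hn : 0 < n) (d : ℕ) (hd1 : 1 ≤ d) (hdn : d ≤ n)
    (p q : Fin n → ℝ)
    (hp : ∀ i, p i ∈ Set.Icc (0 : ℝ) 1) (hq : ∀ i, q i ∈ Set.Icc (0 : ℝ) 1) :
    (∀ ℓ : ℕ, 1 ≤ ℓ → ℓ ≤ d → ∑ i, p i ^ ℓ = ∑ i, q i ^ ℓ) ↔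
    (∀ ℓ : ℕ, 1 ≤ ℓ → ℓ ≤ d → sumBernMoment n p ℓ = sumBernMoment n q ℓ) := by
  classical
  open Stmt9Aux Polynomial in
  have ha0 : esym n p 0 = esym n q 0 := by simp [esym]
  -- power sums ↔ elementary symmetric
  have h1 : (∀ ℓ, 1 ≤ ℓ → ℓ ≤ d → esym n p ℓ = esym n q ℓ) ↔
      (∀ ℓ, 1 ≤ ℓ → ℓ ≤ d → ∑ i, p i ^ ℓ = ∑ i, q i ^ ℓ) := by
    apply triangular d (esym n p) (esym n q)
      (fun ℓ => ∑ i, p i ^ ℓ) (fun ℓ => ∑ i, q i ^ ℓ)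
      (fun ℓ => (-1)^(ℓ+1) * ℓ)
    · intro ℓ hℓ1 _
      have : (ℓ : ℝ) ≠ 0 := Nat.cast_ne_zero.mpr (by omega)
      intro hcontra
      rcases mul_eq_zero.mp hcontra with h | h
      · exact (pow_ne_zero _ (by norm_num : (-1:ℝ) ≠ 0)) h
      · exact this h
    · exact ha0
    · simp
    · intro ℓ hℓ1 _ hka hkb
      rw [newton_rel p ℓ hℓ1, newton_rel q ℓ hℓ1]
      have hsum : ∑ a ∈ (Finset.HasAntidiagonal.antidiagonal ℓ).filter (fun a => a.1 ∈ Set.Ioo 0 ℓ),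
            (-1:ℝ)^a.1 * esym n p a.1 * (∑ i, p i ^ a.2)
          = ∑ a ∈ (Finset.HasAntidiagonal.antidiagonal ℓ).filter (fun a => a.1 ∈ Set.Ioo 0 ℓ),
            (-1:ℝ)^a.1 * esym n q a.1 * (∑ i, q i ^ a.2) := by
        apply Finset.sum_congr rfl
        intro a ha
        simp only [Finset.mem_filter, Finset.HasAntidiagonal.mem_antidiagonal, Set.mem_Ioo] at ha
        have hadd : a.1 + a.2 = ℓ := ha.1
        have h1lt : a.1 < ℓ := ha.2.2
        have h2lt : a.2 < ℓ := by omega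
        rw [hka a.1 h1lt, hkb a.2 h2lt]
      rw [hsum]
      ring
  -- moments ↔ elementary symmetric
  have h2 : (∀ ℓ, 1 ≤ ℓ → ℓ ≤ d → esym n p ℓ = esym n q ℓ) ↔
      (∀ ℓ, 1 ≤ ℓ → ℓ ≤ d → sumBernMoment n p ℓ = sumBernMoment n q ℓ) := by
    apply triangular d (esym n p) (esym n q) (sumBernMoment n p) (sumBernMoment n q)
      (fun ℓ => (Nat.factorial ℓ : ℝ))
    · intro ℓ _ _
      exact Nat.cast_ne_zero.mpr (Nat.factorial_ne_zero ℓ)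
    · exact ha0
    · have hp0 : sumBernMoment n p 0 = 1 := by
        have := total p
        simpa [sumBernMoment, bw] using this
      have hq0 : sumBernMoment n q 0 = 1 := by
        have := total q
        simpa [sumBernMoment, bw] using this
      rw [hp0, hq0]
    · intro ℓ hℓ1 _ _ hkb
      rw [moment_rel p ℓ hℓ1, moment_rel q ℓ hℓ1]
      have hsum : ∑ k ∈ range ℓ, ((X : ℝ[X])^ℓ - descPochhammer ℝ ℓ).coeff k * sumBernMoment n p k
          = ∑ k ∈ range ℓ, ((X : ℝ[X])^ℓ - descPochhammer ℝ ℓ).coeff k * sumBernMoment n q k := by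
        apply Finset.sum_congr rfl
        intro k hk
        rw [hkb k (Finset.mem_range.mp hk)]
      rw [hsum]
      ring
  exact h1.symm.trans h2
end

section
/- Consider the anonymous game of the construction described in the context, determined by an integer k ≥ 1, a real δ > 0, and probabilities p_1, …, p_k ∈ [3δk, 1]. Then for every δ' with 0 ≤ δ' < δ and every δ'-Nash equilibrium (q_1,…,q_k, q_B, q_C) of this game: |q_i − p_i| ≤ 7δk² for every i ∈ {1,…,k}, and moreover q_B = 0 or q_C = 0. -/
open Finset

/-- `(q, qB, qC)` is a `δ'`-Nash equilibrium of the anonymous game with `k` type-A players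
(with target probabilities `p`) and two extra players `B` and `C`, as constructed in the lower
bound for anonymous games. The expected payoffs are:
`U^B_1 = (∑ q − μ)/k`, `U^B_0 = 2δ`, `U^C_1 = (μ − ∑ q)/k`, `U^C_0 = 2δ`,
`U^i_0 = (μ₋ᵢ(1−qB)(1−qC) − δk·qC)/k`, `U^i_1 = ((∑_{j≠i} q_j)(1−qB)(1−qC) − δk·qB)/k`,
where `μ = ∑ p` and `μ₋ᵢ = ∑_{j≠i} p_j`. -/
def AnonNash (k : ℕ) (δ : ℝ) (p : Fin k → ℝ) (δ' : ℝ)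
    (q : Fin k → ℝ) (qB qC : ℝ) : Prop :=
  (0 < qB → (∑ i, q i - ∑ i, p i) / k ≥ 2 * δ - δ') ∧
  (qB < 1 → 2 * δ ≥ (∑ i, q i - ∑ i, p i) / k - δ') ∧
  (0 < qC → (∑ i, p i - ∑ i, q i) / k ≥ 2 * δ - δ') ∧
  (qC < 1 → 2 * δ ≥ (∑ i, p i - ∑ i, q i) / k - δ') ∧
  (∀ i : Fin k,
    (0 < q i →
      ((∑ j ∈ Finset.univ.erase i, q j) * (1 - qB) * (1 - qC) - δ * k * qB) / k ≥
      ((∑ j ∈ Finset.univ.erase i, p j) * (1 - qB) * (1 - qC) - δ * k * qC) / k - δ') ∧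
    (q i < 1 →
      ((∑ j ∈ Finset.univ.erase i, p j) * (1 - qB) * (1 - qC) - δ * k * qC) / k ≥
      ((∑ j ∈ Finset.univ.erase i, q j) * (1 - qB) * (1 - qC) - δ * k * qB) / k - δ'))

set_option maxHeartbeats 1600000 in
/-- In every δ′-Nash equilibrium of the constructed anonymous game (δ′ < δ), each type-A player i plays 1 with probability within 7δk² of p i, and at least one of B, C plays 1 with probability 0. -/
theorem stmt13 (k : ℕ) (hk : 1 ≤ k) (δ : ℝ) (hδ : 0 < δ)
    (p : Fin k → ℝ) (hp : ∀ i, 3 * δ * k ≤ p i ∧ p i ≤ 1)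
    (δ' : ℝ) (hδ'0 : 0 ≤ δ') (hδ' : δ' < δ)
    (q : Fin k → ℝ) (qB qC : ℝ)
    (hq : ∀ i, q i ∈ Set.Icc (0 : ℝ) 1)
    (hqB : qB ∈ Set.Icc (0 : ℝ) 1) (hqC : qC ∈ Set.Icc (0 : ℝ) 1)
    (hNash : AnonNash k δ p δ' q qB qC) :
    (∀ i, |q i - p i| ≤ 7 * δ * k ^ 2) ∧ (qB = 0 ∨ qC = 0) := by
  obtain ⟨h1, h2, h3, h4, h5⟩ := hNash
  have hKpos : (0:ℝ) < (k:ℝ) := by exact_mod_cast hk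
  have hK1 : (1:ℝ) ≤ (k:ℝ) := by exact_mod_cast hk
  set K := (k:ℝ) with hKdef
  set S := ∑ i, q i with hSdef
  set μ := ∑ i, p i with hμdef
  have hsq : ∀ i : Fin k, ∑ j ∈ Finset.univ.erase i, q j = S - q i :=
    fun i => Finset.sum_erase_eq_sub (Finset.mem_univ i)
  have hsp : ∀ i : Fin k, ∑ j ∈ Finset.univ.erase i, p j = μ - p i :=
    fun i => Finset.sum_erase_eq_sub (Finset.mem_univ i)
  have hμub : μ ≤ K := by
    have h := Finset.sum_le_sum (fun i (_ : i ∈ Finset.univ) => (hp i).2)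
    simpa [hμdef] using h
  have hμlb : 3 * δ * K * K ≤ μ := by
    have h := Finset.sum_le_sum (fun i (_ : i ∈ Finset.univ) => (hp i).1)
    have h' : K * (3 * δ * K) ≤ μ := by simpa [hμdef, mul_comm] using h
    nlinarith [h']
  have hS0 : 0 ≤ S := Finset.sum_nonneg fun i _ => (hq i).1
  have hS1 : S ≤ K := by
    have h := Finset.sum_le_sum (fun i (_ : i ∈ Finset.univ) => (hq i).2)
    simpa [hSdef] using h
  -- multiplied-out Nash conditions
  have h1' : 0 < qB → (2*δ - δ') * K ≤ S - μ := fun hb => (le_div_iff₀ hKpos).mp (h1 hb)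
  have h2' : qB < 1 → S - μ ≤ (2*δ + δ') * K := by
    intro hb
    have h := h2 hb
    have h' : (S - μ) / K ≤ 2*δ + δ' := by linarith
    exact (div_le_iff₀ hKpos).mp h'
  have h3' : 0 < qC → (2*δ - δ') * K ≤ μ - S := fun hc => (le_div_iff₀ hKpos).mp (h3 hc)
  have h4' : qC < 1 → μ - S ≤ (2*δ + δ') * K := by
    intro hc
    have h := h4 hc
    have h' : (μ - S) / K ≤ 2*δ + δ' := by linarith
    exact (div_le_iff₀ hKpos).mp h'
  have hA : ∀ i, 0 < q i →
      (μ - p i) * (1 - qB) * (1 - qC) - δ*K*qC ≤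
      (S - q i) * (1 - qB) * (1 - qC) - δ*K*qB + δ'*K := by
    intro i hi
    have h := (h5 i).1 hi
    rw [hsq i, hsp i] at h
    have h' : ((μ - p i) * (1 - qB) * (1 - qC) - δ*K*qC) / K ≤
        ((S - q i) * (1 - qB) * (1 - qC) - δ*K*qB) / K + δ' := by linarith
    have h'' := (div_le_iff₀ hKpos).mp h'
    rw [add_mul, div_mul_cancel₀ _ hKpos.ne'] at h''
    linarith
  have hBih : ∀ i, q i < 1 →
      (S - q i) * (1 - qB) * (1 - qC) - δ*K*qB ≤
      (μ - p i) * (1 - qB) * (1 - qC) - δ*K*qC + δ'*K := by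
    intro i hi
    have h := (h5 i).2 hi
    rw [hsq i, hsp i] at h
    have h' : ((S - q i) * (1 - qB) * (1 - qC) - δ*K*qB) / K ≤
        ((μ - p i) * (1 - qB) * (1 - qC) - δ*K*qC) / K + δ' := by linarith
    have h'' := (div_le_iff₀ hKpos).mp h'
    rw [add_mul, div_mul_cancel₀ _ hKpos.ne'] at h''
    linarith
  have hdd : 0 < (δ - δ') * K := mul_pos (by linarith) hKpos
  have hnBC : ¬ (0 < qB ∧ 0 < qC) := by
    rintro ⟨hb, hc⟩
    have e1 := h1' hb
    have e2 := h3' hc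
    have : 0 < (2*δ - δ') * K := mul_pos (by linarith) hKpos
    linarith
  have hB1 : qB < 1 := by
    rcases hqB.2.lt_or_eq with h | h
    · exact h
    · exfalso
      have hb : 0 < qB := by rw [h]; norm_num
      have hc0 : qC = 0 := by
        by_contra hc
        exact hnBC ⟨hb, (hqC.1).lt_of_ne (Ne.symm hc)⟩
      have hq0 : ∀ i, q i = 0 := by
        intro i
        by_contra hqi
        have hi : 0 < q i := (hq i).1.lt_of_ne (Ne.symm hqi)
        have hAi := hA i hi
        rw [h, hc0] at hAi
        nlinarith [hAi, hdd]
      have hSz : S = 0 := by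
        rw [hSdef]
        exact Finset.sum_eq_zero fun i _ => hq0 i
      have e1 := h1' hb
      rw [hSz] at e1
      have p1 : 0 < (2*δ - δ') * K := mul_pos (by linarith) hKpos
      have p2 : 0 < 3 * δ * K * K := by positivity
      linarith
  have hC1 : qC < 1 := by
    rcases hqC.2.lt_or_eq with h | h
    · exact h
    · exfalso
      have hc : 0 < qC := by rw [h]; norm_num
      have hb0 : qB = 0 := by
        by_contra hb
        exact hnBC ⟨(hqB.1).lt_of_ne (Ne.symm hb), hc⟩
      have hq1 : ∀ i, q i = 1 := by
        intro i
        by_contra hqi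
        have hi : q i < 1 := (hq i).2.lt_of_ne hqi
        have hBi := hBih i hi
        rw [h, hb0] at hBi
        nlinarith [hBi, hdd]
      have hSK : S = K := by
        rw [hSdef]
        rw [Finset.sum_congr rfl (fun i _ => hq1 i)]
        simp [hKdef]
      have e1 := h3' hc
      rw [hSK] at e1
      have p1 : 0 < (2*δ - δ') * K := mul_pos (by linarith) hKpos
      linarith
  have hD1 : S - μ ≤ 3*δ*K := by
    have := h2' hB1
    nlinarith [mul_lt_mul_of_pos_right hδ' hKpos]
  have hD2 : μ - S ≤ 3*δ*K := by
    have := h4' hC1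
    nlinarith [mul_lt_mul_of_pos_right hδ' hKpos]
  have hδK : 0 < δ * K := mul_pos hδ hKpos
  have hδK2 : δ * K ≤ δ * K * K := by nlinarith [hδK]
  have hallq : ∀ j : Fin k, ∑ i ∈ Finset.univ.erase j, (q i - p i) = (S - q j) - (μ - p j) := by
    intro j
    rw [Finset.sum_sub_distrib, hsq j, hsp j]
  have hcard : ∀ j : Fin k, (((Finset.univ.erase j) : Finset (Fin k)).card : ℝ) = K - 1 := by
    intro j
    rw [Finset.card_erase_of_mem (Finset.mem_univ j), Finset.card_univ, Fintype.card_fin,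
      Nat.cast_sub hk, hKdef]
    simp
  clear_value K S μ
  clear hKdef hSdef hμdef hsq hsp h1 h2 h3 h4 h5
  rcases eq_or_lt_of_le hqC.1 with hc0 | hcpos
  · -- case qC = 0
    have hc0' : qC = 0 := hc0.symm
    have hT : 0 < 1 - qB := by linarith
    have key : ∀ i, q i - p i ≤ (S - μ) + δ*K := by
      intro i
      rcases eq_or_lt_of_le (hq i).1 with hz | hpos
      · have hpi := (hp i).1
        rw [← hz]
        nlinarith [hD2, mul_lt_mul_of_pos_right hδ' hKpos]
      · have h := hA i hpos
        rw [hc0'] at h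
        by_contra hcon
        push_neg at hcon
        have hneg : ((S - q i) - (μ - p i) + δ*K) * (1 - qB) < 0 :=
          mul_neg_of_neg_of_pos (by linarith) hT
        nlinarith [h, hneg, hdd]
    refine ⟨fun j => ?_, Or.inr hc0'⟩
    have hsum : ∑ i ∈ Finset.univ.erase j, (q i - p i) ≤ (K - 1) * ((S - μ) + δ*K) := by
      have h := Finset.sum_le_card_nsmul (Finset.univ.erase j) (fun i => q i - p i)
        ((S - μ) + δ*K) (fun i _ => key i)
      rw [nsmul_eq_mul] at h
      rw [hcard j] at h
      exact h
    have hqj : q j - p j = (S - μ) - ∑ i ∈ Finset.univ.erase j, (q i - p i) := by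
      have := hallq j
      linarith
    rw [abs_le]
    constructor
    · have hlow : (S - μ) - (K - 1) * ((S - μ) + δ*K) ≤ q j - p j := by
        rw [hqj]; linarith
      rcases le_total K 2 with hk2 | hk2
      · nlinarith [hlow, mul_le_mul_of_nonneg_left (show -(3*δ*K) ≤ S - μ by linarith)
          (show (0:ℝ) ≤ 2 - K by linarith), hδK, hδK2]
      · nlinarith [hlow, mul_le_mul_of_nonneg_left (show -(3*δ*K) ≤ μ - S by linarith)
          (show (0:ℝ) ≤ K - 2 by linarith), hδK, hδK2]
    · nlinarith [key j, hD1, hδK, hδK2]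
  · -- case 0 < qC
    have hb0 : qB = 0 := by
      by_contra hb
      exact hnBC ⟨(hqB.1).lt_of_ne (Ne.symm hb), hcpos⟩
    have hT : 0 < 1 - qC := by linarith
    have hMS : (2*δ - δ') * K ≤ μ - S := h3' hcpos
    have key : ∀ i, p i - q i ≤ (μ - S) + δ*K := by
      intro i
      rcases (hq i).2.lt_or_eq with hlt | he
      · have h := hBih i hlt
        rw [hb0] at h
        by_contra hcon
        push_neg at hcon
        have hneg : ((μ - p i) - (S - q i) + δ*K) * (1 - qC) < 0 :=
          mul_neg_of_neg_of_pos (by linarith) hT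
        nlinarith [h, hneg, hdd]
      · have hpi := (hp i).2
        rw [he]
        have p1 : 0 < (2*δ - δ') * K := mul_pos (by linarith) hKpos
        linarith
    refine ⟨fun j => ?_, Or.inl hb0⟩
    have hsum : ∑ i ∈ Finset.univ.erase j, (p i - q i) ≤ (K - 1) * ((μ - S) + δ*K) := by
      have h := Finset.sum_le_card_nsmul (Finset.univ.erase j) (fun i => p i - q i)
        ((μ - S) + δ*K) (fun i _ => key i)
      rw [nsmul_eq_mul] at h
      rw [hcard j] at h
      exact h
    have hpj : p j - q j = (μ - S) - ∑ i ∈ Finset.univ.erase j, (p i - q i) := by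
      have h1 := hallq j
      have h2 : ∑ i ∈ Finset.univ.erase j, (p i - q i)
          = - ∑ i ∈ Finset.univ.erase j, (q i - p i) := by
        rw [← Finset.sum_neg_distrib]
        exact Finset.sum_congr rfl fun i _ => by ring
      rw [h2]
      linarith
    rw [abs_le]
    constructor
    · nlinarith [key j, hD2, hδK, hδK2]
    · have hup : q j - p j ≤ (K - 1) * ((μ - S) + δ*K) - (μ - S) := by
        rw [show q j - p j = -(p j - q j) by ring, hpj]; linarith
      rcases le_total K 2 with hk2 | hk2
      · nlinarith [hup, mul_le_mul_of_nonneg_left (show -(3*δ*K) ≤ μ - S by linarith)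
          (show (0:ℝ) ≤ 2 - K by linarith), hδK, hδK2]
      · nlinarith [hup, mul_le_mul_of_nonneg_left (show μ - S ≤ 3*δ*K by linarith)
          (show (0:ℝ) ≤ K - 2 by linarith), hδK, hδK2]
end

section
/- Consider the anonymous game of the construction described in the context, determined by an integer k ≥ 1, a real δ > 0, and probabilities p_1, …, p_k ∈ [3δk, 1]. Then for every δ' with 0 ≤ δ' < δ and every δ'-Nash equilibrium (q_1,…,q_k, q_B, q_C) of this game: |Σ_{i=1}^k q_i − μ| ≤ 3δk, where μ = Σ_{i=1}^k p_i. -/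
open Finset

/-- In every δ′-Nash equilibrium of the constructed anonymous game (δ′ < δ), the total probability mass of the type-A players is within 3δk of μ = ∑ p. -/
theorem stmt14 (k : ℕ) (hk : 1 ≤ k) (δ : ℝ) (hδ : 0 < δ)
    (p : Fin k → ℝ) (hp : ∀ i, 3 * δ * k ≤ p i ∧ p i ≤ 1)
    (δ' : ℝ) (hδ'0 : 0 ≤ δ') (hδ' : δ' < δ)
    (q : Fin k → ℝ) (qB qC : ℝ)
    (hq : ∀ i, q i ∈ Set.Icc (0 : ℝ) 1)
    (hqB : qB ∈ Set.Icc (0 : ℝ) 1) (hqC : qC ∈ Set.Icc (0 : ℝ) 1)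
    (hNash : AnonNash k δ p δ' q qB qC) :
    |∑ i, q i - ∑ i, p i| ≤ 3 * δ * k := by

  obtain ⟨h1, h2, h3, h4, h5⟩ := hNash
  have hk' : (0:ℝ) < k := by exact_mod_cast Nat.lt_of_lt_of_le Nat.zero_lt_one hk
  have hkne : (k:ℝ) ≠ 0 := ne_of_gt hk'
  by_contra hcon
  push_neg at hcon
  rcases lt_abs.mp hcon with hcase | hcase
  · -- ∑ q - ∑ p > 3δk
    have hqB1 : qB = 1 := by
      by_contra hne
      have hlt : qB < 1 := lt_of_le_of_ne hqB.2 hne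
      have h := h2 hlt
      have hdiv : (∑ i, q i - ∑ i, p i) / k ≤ 2 * δ + δ' := by linarith
      have := (div_le_iff₀ hk').mp hdiv
      nlinarith
    have hqC0 : qC = 0 := by
      by_contra hne
      have hpos : 0 < qC := lt_of_le_of_ne hqC.1 (Ne.symm hne)
      have h := h3 hpos
      have h2' := (le_div_iff₀ hk').mp h
      nlinarith
    have hq0 : ∀ i, q i = 0 := by
      intro i
      by_contra hne
      have hpos : 0 < q i := lt_of_le_of_ne (hq i).1 (Ne.symm hne)
      have h := (h5 i).1 hpos
      rw [hqB1, hqC0] at h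
      have hsimp : ((∑ j ∈ Finset.univ.erase i, q j) * (1 - 1) * (1 - 0) - δ * k * 1) / k
          = -δ := by field_simp; ring
      have hsimp2 : ((∑ j ∈ Finset.univ.erase i, p j) * (1 - 1) * (1 - 0) - δ * k * 0) / k
          = 0 := by field_simp; ring
      rw [hsimp, hsimp2] at h
      linarith
    have hsq : ∑ i, q i = 0 := Finset.sum_eq_zero fun i _ => hq0 i
    have hsp : (0:ℝ) ≤ ∑ i, p i :=
      Finset.sum_nonneg fun i _ => le_trans (by nlinarith) (hp i).1
    nlinarith
  · -- ∑ p - ∑ q > 3δk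
    have hqC1 : qC = 1 := by
      by_contra hne
      have hlt : qC < 1 := lt_of_le_of_ne hqC.2 hne
      have h := h4 hlt
      have hdiv : (∑ i, p i - ∑ i, q i) / k ≤ 2 * δ + δ' := by linarith
      have := (div_le_iff₀ hk').mp hdiv
      nlinarith
    have hqB0 : qB = 0 := by
      by_contra hne
      have hpos : 0 < qB := lt_of_le_of_ne hqB.1 (Ne.symm hne)
      have h := h1 hpos
      have h2' := (le_div_iff₀ hk').mp h
      nlinarith
    have hq1 : ∀ i, q i = 1 := by
      intro i
      by_contra hne
      have hlt : q i < 1 := lt_of_le_of_ne (hq i).2 hne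
      have h := (h5 i).2 hlt
      rw [hqB0, hqC1] at h
      have hsimp : ((∑ j ∈ Finset.univ.erase i, p j) * (1 - 0) * (1 - 1) - δ * k * 1) / k
          = -δ := by field_simp; ring
      have hsimp2 : ((∑ j ∈ Finset.univ.erase i, q j) * (1 - 0) * (1 - 1) - δ * k * 0) / k
          = 0 := by field_simp; ring
      rw [hsimp, hsimp2] at h
      linarith
    have hsq : ∑ i, q i = (k:ℝ) := by
      rw [Finset.sum_congr rfl fun i _ => hq1 i]
      simp
    have hsp : ∑ i, p i ≤ (k:ℝ) := by
      calc ∑ i, p i ≤ ∑ _i : Fin k, (1:ℝ) :=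
            Finset.sum_le_sum fun i _ => (hp i).2
        _ = k := by simp
    nlinarith
end

section
/- Consider the anonymous game of the construction described in the context, determined by an integer k ≥ 1, a real δ > 0, and probabilities p_1, …, p_k ∈ [3δk, 1]. Then for every δ' with 0 ≤ δ' < δ and every δ'-Nash equilibrium (q_1,…,q_k, q_B, q_C) of this game: q_B = 0 or q_C = 0. -/
open Finset

/-- In every δ′-Nash equilibrium of the constructed anonymous game (δ′ < δ), at least one of the players B and C plays strategy 1 with probability 0. -/
theorem stmt15 (k : ℕ) (hk : 1 ≤ k) (δ : ℝ) (hδ : 0 < δ)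
    (p : Fin k → ℝ) (hp : ∀ i, 3 * δ * k ≤ p i ∧ p i ≤ 1)
    (δ' : ℝ) (hδ'0 : 0 ≤ δ') (hδ' : δ' < δ)
    (q : Fin k → ℝ) (qB qC : ℝ)
    (hq : ∀ i, q i ∈ Set.Icc (0 : ℝ) 1)
    (hqB : qB ∈ Set.Icc (0 : ℝ) 1) (hqC : qC ∈ Set.Icc (0 : ℝ) 1)
    (hNash : AnonNash k δ p δ' q qB qC) :
    qB = 0 ∨ qC = 0 := by
  by_contra h
  push_neg at h
  have hB : 0 < qB := lt_of_le_of_ne hqB.1 (Ne.symm h.1)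
  have hC : 0 < qC := lt_of_le_of_ne hqC.1 (Ne.symm h.2)
  have h1 := hNash.1 hB
  have h2 := hNash.2.2.1 hC
  have hsum : (∑ i, q i - ∑ i, p i) / k + (∑ i, p i - ∑ i, q i) / k = 0 := by
    rw [← add_div]; ring_nf
  linarith
end

section
/- Consider the anonymous game of the construction described in the context, determined by an integer k ≥ 1, a real δ > 0, and probabilities p_1, …, p_k ∈ [3δk, 1]. Then for every δ' with 0 ≤ δ' < δ and every δ'-Nash equilibrium (q_1,…,q_k, q_B, q_C) of this game, and every i ∈ {1,…,k}: |Σ_{j≠i} q_j − μ_{-i}| ≤ 4δk², where μ_{-i} = Σ_{j≠i} p_j. -/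
open Finset

private lemma key_div {k A B δ' : ℝ} (hk : 0 < k) (h : A / k ≥ B / k - δ') :
    B - δ' * k ≤ A := by
  have h2 : (B - A) / k ≤ δ' := by rw [sub_div]; linarith
  have h3 := (div_le_iff₀ hk).mp h2
  linarith

set_option maxHeartbeats 2000000 in
/-- In every δ′-Nash equilibrium of the constructed anonymous game (δ′ < δ), for every type-A player i, the total mass of the other type-A players is within 4δk² of μ₋ᵢ. -/
theorem stmt16 (k : ℕ) (hk : 1 ≤ k) (δ : ℝ) (hδ : 0 < δ)
    (p : Fin k → ℝ) (hp : ∀ i, 3 * δ * k ≤ p i ∧ p i ≤ 1)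
    (δ' : ℝ) (hδ'0 : 0 ≤ δ') (hδ' : δ' < δ)
    (q : Fin k → ℝ) (qB qC : ℝ)
    (hq : ∀ i, q i ∈ Set.Icc (0 : ℝ) 1)
    (hqB : qB ∈ Set.Icc (0 : ℝ) 1) (hqC : qC ∈ Set.Icc (0 : ℝ) 1)
    (hNash : AnonNash k δ p δ' q qB qC) :
    ∀ i, |∑ j ∈ Finset.univ.erase i, q j - ∑ j ∈ Finset.univ.erase i, p j| ≤ 4 * δ * k ^ 2 := by
  obtain ⟨hB1, hB0, hC1, hC0, hA⟩ := hNash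
  have hkR : (0:ℝ) < (k:ℝ) := by
    have : (0:ℕ) < k := hk
    exact_mod_cast this
  have hk1 : (1:ℝ) ≤ (k:ℝ) := by exact_mod_cast hk
  have hδk : 0 < δ * (k:ℝ) := by positivity
  have hq0 : ∀ j, 0 ≤ q j := fun j => (hq j).1
  have hq1 : ∀ j, q j ≤ 1 := fun j => (hq j).2
  have hδ'k : δ' * (k:ℝ) < δ * (k:ℝ) := mul_lt_mul_of_pos_right hδ' hkR
  have h4pos : (0:ℝ) ≤ 4 * δ * (k:ℝ)^2 := by positivity
  have hδkk : δ * (k:ℝ) ≤ 4 * δ * (k:ℝ)^2 := by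
    have h := mul_nonneg hδk.le (show (0:ℝ) ≤ (k:ℝ) - 1 by linarith)
    nlinarith
  have h3le4 : 3 * δ * (k:ℝ) ≤ 4 * δ * (k:ℝ)^2 := by
    have h := mul_nonneg hδk.le (show (0:ℝ) ≤ (k:ℝ) - 1 by linarith)
    nlinarith
  -- multiplied-out Nash conditions for type-A players
  have hA1 : ∀ j, 0 < q j →
      (∑ l ∈ Finset.univ.erase j, p l) * (1 - qB) * (1 - qC) - δ * k * qC - δ' * k ≤
      (∑ l ∈ Finset.univ.erase j, q l) * (1 - qB) * (1 - qC) - δ * k * qB :=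
    fun j hj => key_div hkR ((hA j).1 hj)
  have hA0 : ∀ j, q j < 1 →
      (∑ l ∈ Finset.univ.erase j, q l) * (1 - qB) * (1 - qC) - δ * k * qB - δ' * k ≤
      (∑ l ∈ Finset.univ.erase j, p l) * (1 - qB) * (1 - qC) - δ * k * qC :=
    fun j hj => key_div hkR ((hA j).2 hj)
  set S := ∑ j, q j with hSdef
  set μ := ∑ j, p j with hμdef
  have hS0 : 0 ≤ S := Finset.sum_nonneg fun j _ => hq0 j
  have hSk : S ≤ k := by
    calc S ≤ ∑ _j : Fin k, (1:ℝ) := Finset.sum_le_sum fun j _ => hq1 j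
      _ = k := by simp
  have hμk : μ ≤ k := by
    calc μ ≤ ∑ _j : Fin k, (1:ℝ) := Finset.sum_le_sum fun j _ => (hp j).2
      _ = k := by simp
  have hμlow : (k:ℝ) * (3 * δ * k) ≤ μ := by
    calc (k:ℝ) * (3 * δ * k) = ∑ _j : Fin k, 3 * δ * (k:ℝ) := by
          rw [Finset.sum_const, Finset.card_univ, Fintype.card_fin, nsmul_eq_mul]
      _ ≤ μ := Finset.sum_le_sum fun j _ => (hp j).1
  intro i
  have hSi_rel : (∑ j ∈ Finset.univ.erase i, q j) + q i = S :=
    Finset.sum_erase_add _ _ (mem_univ i)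
  have hμi_rel : (∑ j ∈ Finset.univ.erase i, p j) + p i = μ :=
    Finset.sum_erase_add _ _ (mem_univ i)
  have hcard : (((Finset.univ.erase i).card : ℕ) : ℝ) = (k:ℝ) - 1 := by
    rw [Finset.card_erase_of_mem (mem_univ i), card_univ, Fintype.card_fin]
    have := Nat.cast_sub hk (R := ℝ)
    simpa using this
  rw [abs_le]
  rcases eq_or_lt_of_le hqB.1 with hB | hB
  · rcases eq_or_lt_of_le hqC.1 with hC | hC
    · -- Case qB = 0, qC = 0
      have hBu : S - μ ≤ (2*δ+δ') * k := by
        have h := hB0 (by rw [← hB]; norm_num)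
        have h2 : (S - μ)/k ≤ 2*δ+δ' := by linarith
        linarith [(div_le_iff₀ hkR).mp h2]
      have hCu : μ - S ≤ (2*δ+δ') * k := by
        have h := hC0 (by rw [← hC]; norm_num)
        have h2 : (μ - S)/k ≤ 2*δ+δ' := by linarith
        linarith [(div_le_iff₀ hkR).mp h2]
      constructor
      · rcases eq_or_lt_of_le (hq0 i) with hi | hi
        · -- q i = 0
          linarith [(hp i).1, hSi_rel, hμi_rel]
        · have h := hA1 i hi
          rw [← hB, ← hC] at h
          norm_num at h
          linarith
      · rcases eq_or_lt_of_le (hq1 i) with hi | hi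
        · -- q i = 1
          linarith [(hp i).2, hSi_rel, hμi_rel]
        · have h := hA0 i hi
          rw [← hB, ← hC] at h
          norm_num at h
          linarith
    · -- Case qB = 0, 0 < qC
      have hClt : qC < 1 := by
        by_contra hcon
        have hC1' : qC = 1 := le_antisymm hqC.2 (not_lt.mp hcon)
        have hall : ∀ j, q j = 1 := by
          intro j
          by_contra hj
          have hjlt : q j < 1 := lt_of_le_of_ne (hq1 j) hj
          have h := hA0 j hjlt
          rw [hC1', ← hB] at h
          norm_num at h
          linarith
        have hSeq : S = k := by
          rw [hSdef]
          calc (∑ j, q j) = ∑ _j : Fin k, (1:ℝ) := Finset.sum_congr rfl fun j _ => hall j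
            _ = k := by simp
        have h := (le_div_iff₀ hkR).mp (hC1 hC)
        nlinarith [mul_pos (show (0:ℝ) < 2*δ-δ' by linarith) hkR]
      have hCl : (2*δ-δ') * k ≤ μ - S := (le_div_iff₀ hkR).mp (hC1 hC)
      have hCu : μ - S ≤ (2*δ+δ') * k := by
        have h := hC0 hClt
        have h2 : (μ - S)/k ≤ 2*δ+δ' := by linarith
        linarith [(div_le_iff₀ hkR).mp h2]
      have hkey : ∀ j, p j - q j ≤ 4 * δ * k := by
        intro j
        rcases eq_or_lt_of_le (hq1 j) with hj | hj
        · linarith [(hp j).2, hδk]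
        · have h := hA0 j hj
          rw [← hB] at h
          norm_num at h
          have hμjrel : (∑ l ∈ Finset.univ.erase j, p l) + p j = μ :=
            Finset.sum_erase_add _ _ (mem_univ j)
          have hSjrel : (∑ l ∈ Finset.univ.erase j, q l) + q j = S :=
            Finset.sum_erase_add _ _ (mem_univ j)
          have hstep : (δ - δ') * k ≤
              ((∑ l ∈ Finset.univ.erase j, p l) - (∑ l ∈ Finset.univ.erase j, q l) + δ * k) * (1 - qC) := by
            nlinarith [h]
          have h1qC : 0 < 1 - qC := by linarith
          have hx : 0 < (∑ l ∈ Finset.univ.erase j, p l) - (∑ l ∈ Finset.univ.erase j, q l) + δ * k := by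
            by_contra hcon
            push_neg at hcon
            nlinarith [mul_nonpos_of_nonpos_of_nonneg hcon h1qC.le]
          linarith
      constructor
      · -- lower bound via summing hkey over erase i
        have hsum : (∑ j ∈ Finset.univ.erase i, p j) - (∑ j ∈ Finset.univ.erase i, q j)
            = ∑ j ∈ Finset.univ.erase i, (p j - q j) := by
          rw [Finset.sum_sub_distrib]
        have hb : (∑ j ∈ Finset.univ.erase i, p j) - (∑ j ∈ Finset.univ.erase i, q j)
            ≤ ((k:ℝ) - 1) * (4*δ*k) := by
          rw [hsum]
          calc (∑ j ∈ Finset.univ.erase i, (p j - q j))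
              ≤ ∑ _j ∈ Finset.univ.erase i, 4*δ*(k:ℝ) := Finset.sum_le_sum fun j _ => hkey j
            _ = ((Finset.univ.erase i).card : ℝ) * (4*δ*k) := by
                rw [Finset.sum_const, nsmul_eq_mul]
            _ = ((k:ℝ) - 1) * (4*δ*k) := by rw [hcard]
        nlinarith [hδk]
      · -- upper bound
        have h1 : (∑ j ∈ Finset.univ.erase i, q j) - (∑ j ∈ Finset.univ.erase i, p j)
            ≤ (2*δ+δ') * k := by
          linarith [hkey i, hCl, hSi_rel, hμi_rel]
        have h2 : 2*δ+δ' ≤ 4*δ*(k:ℝ) := by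
          nlinarith [mul_nonneg hδ.le (show (0:ℝ) ≤ (k:ℝ) - 1 by linarith)]
        have h3 : (2*δ+δ') * k ≤ (4*δ*(k:ℝ)) * k :=
          mul_le_mul_of_nonneg_right h2 hkR.le
        nlinarith
  · rcases eq_or_lt_of_le hqC.1 with hC | hC
    · -- Case 0 < qB, qC = 0
      have hBlt : qB < 1 := by
        by_contra hcon
        have hB1' : qB = 1 := le_antisymm hqB.2 (not_lt.mp hcon)
        have hall : ∀ j, q j = 0 := by
          intro j
          by_contra hj
          have hjgt : 0 < q j := lt_of_le_of_ne (hq0 j) (fun h => hj h.symm)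
          have h := hA1 j hjgt
          rw [hB1', ← hC] at h
          norm_num at h
          linarith
        have hSeq : S = 0 := by
          rw [hSdef]
          calc (∑ j, q j) = ∑ _j : Fin k, (0:ℝ) := Finset.sum_congr rfl fun j _ => hall j
            _ = 0 := by simp
        have h := (le_div_iff₀ hkR).mp (hB1 hB)
        have hμpos : 0 < μ := lt_of_lt_of_le (by positivity) hμlow
        nlinarith [mul_pos (show (0:ℝ) < 2*δ-δ' by linarith) hkR]
      have hBl : (2*δ-δ') * k ≤ S - μ := (le_div_iff₀ hkR).mp (hB1 hB)
      have hBu : S - μ ≤ (2*δ+δ') * k := by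
        have h := hB0 hBlt
        have h2 : (S - μ)/k ≤ 2*δ+δ' := by linarith
        linarith [(div_le_iff₀ hkR).mp h2]
      have hkey : ∀ j, q j - p j ≤ 4 * δ * k := by
        intro j
        rcases eq_or_lt_of_le (hq0 j) with hj | hj
        · have hpj : 0 < p j := lt_of_lt_of_le (by positivity) (hp j).1
          linarith [hδk]
        · have h := hA1 j hj
          rw [← hC] at h
          norm_num at h
          have hμjrel : (∑ l ∈ Finset.univ.erase j, p l) + p j = μ :=
            Finset.sum_erase_add _ _ (mem_univ j)
          have hSjrel : (∑ l ∈ Finset.univ.erase j, q l) + q j = S :=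
            Finset.sum_erase_add _ _ (mem_univ j)
          have hstep : (δ - δ') * k ≤
              ((∑ l ∈ Finset.univ.erase j, q l) - (∑ l ∈ Finset.univ.erase j, p l) + δ * k) * (1 - qB) := by
            nlinarith [h]
          have h1qB : 0 < 1 - qB := by linarith
          have hx : 0 < (∑ l ∈ Finset.univ.erase j, q l) - (∑ l ∈ Finset.univ.erase j, p l) + δ * k := by
            by_contra hcon
            push_neg at hcon
            nlinarith [mul_nonpos_of_nonpos_of_nonneg hcon h1qB.le]
          linarith
      constructor
      · -- lower bound
        rcases eq_or_lt_of_le (hq0 i) with hi | hi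
        · -- q i = 0
          linarith [(hp i).1, hSi_rel, hμi_rel, hBl]
        · -- q i > 0 : Si - μi > -δk
          have h := hA1 i hi
          rw [← hC] at h
          norm_num at h
          have hstep : (δ - δ') * k ≤
              ((∑ l ∈ Finset.univ.erase i, q l) - (∑ l ∈ Finset.univ.erase i, p l) + δ * k) * (1 - qB) := by
            nlinarith [h]
          have h1qB : 0 < 1 - qB := by linarith
          have hx : 0 < (∑ l ∈ Finset.univ.erase i, q l) - (∑ l ∈ Finset.univ.erase i, p l) + δ * k := by
            by_contra hcon
            push_neg at hcon
            nlinarith [mul_nonpos_of_nonpos_of_nonneg hcon h1qB.le]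
          linarith
      · -- upper bound via summing hkey over erase i
        have hsum : (∑ j ∈ Finset.univ.erase i, q j) - (∑ j ∈ Finset.univ.erase i, p j)
            = ∑ j ∈ Finset.univ.erase i, (q j - p j) := by
          rw [Finset.sum_sub_distrib]
        have hb : (∑ j ∈ Finset.univ.erase i, q j) - (∑ j ∈ Finset.univ.erase i, p j)
            ≤ ((k:ℝ) - 1) * (4*δ*k) := by
          rw [hsum]
          calc (∑ j ∈ Finset.univ.erase i, (q j - p j))
              ≤ ∑ _j ∈ Finset.univ.erase i, 4*δ*(k:ℝ) := Finset.sum_le_sum fun j _ => hkey j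
            _ = ((Finset.univ.erase i).card : ℝ) * (4*δ*k) := by
                rw [Finset.sum_const, nsmul_eq_mul]
            _ = ((k:ℝ) - 1) * (4*δ*k) := by rw [hcard]
        nlinarith [hδk]
    · -- Case 0 < qB, 0 < qC : contradiction
      exfalso
      have h1 := hB1 hB
      have h2 := hC1 hC
      have h3 : (S - μ)/(k:ℝ) + (μ - S)/(k:ℝ) = 0 := by ring
      linarith
end
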